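/- arXiv:1605.06839 — 9 statements merged into one kernel-verified Lean document; each statement's English description precedes it below -/
import Mathlib

section
/- For every integer n ≥ 1 and every s ∈ (0,1), the Heisenberg distortion coefficient τ_s^n is strictly increasing on [0,2π): for all θ₁, θ₂ with 0 ≤ θ₁ < θ₂ < 2π one has τ_s^n(θ₁) < τ_s^n(θ₂). -/
open Real Set


/-- The Heisenberg distortion coefficient `τ_s^n` on `[0, 2π)`. -/
noncomputable def heisenbergTau (n : ℕ) (s θ : ℝ) : ℝ :=
  if θ = 0 then s ^ ((2 * (n : ℝ) + 3) / (2 * (n : ℝ) + 1))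
  else
    s ^ ((1 : ℝ) / (2 * (n : ℝ) + 1)) *
      (Real.sin (θ * s / 2) / Real.sin (θ / 2)) ^ ((2 * (n : ℝ) - 1) / (2 * (n : ℝ) + 1)) *
      ((Real.sin (θ * s / 2) - (θ * s / 2) * Real.cos (θ * s / 2)) /
          (Real.sin (θ / 2) - (θ / 2) * Real.cos (θ / 2))) ^ ((1 : ℝ) / (2 * (n : ℝ) + 1))

noncomputable def hG (x : ℝ) : ℝ := Real.sin x - x * Real.cos x

lemma hasDerivAt_hG (x : ℝ) : HasDerivAt hG (x * Real.sin x) x := by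
  have h := (Real.hasDerivAt_sin x).sub ((hasDerivAt_id x).mul (Real.hasDerivAt_cos x))
  refine h.congr_deriv ?_
  simp [id_eq, mul_comm]

lemma hG_cont : Continuous hG :=
  Real.continuous_sin.sub (continuous_id.mul Real.continuous_cos)

lemma hG_strictMono : StrictMonoOn hG (Icc 0 π) := by
  apply strictMonoOn_of_deriv_pos (convex_Icc _ _) hG_cont.continuousOn
  intro x hx
  rw [interior_Icc] at hx
  rw [(hasDerivAt_hG x).deriv]
  exact mul_pos hx.1 (Real.sin_pos_of_pos_of_lt_pi hx.1 hx.2)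

lemma hG_pos {x : ℝ} (h0 : 0 < x) (hπ : x ≤ π) : 0 < hG x := by
  have h := hG_strictMono (by simp [Real.pi_nonneg] : (0:ℝ) ∈ Icc 0 π)
    ⟨h0.le, hπ⟩ h0
  simpa [hG] using h

noncomputable def hQ (t : ℝ) : ℝ := t^2 - 4 + 4 * Real.cos t + t * Real.sin t
noncomputable def hQ1 (t : ℝ) : ℝ := 2*t - 3 * Real.sin t + t * Real.cos t

lemma hasDerivAt_hQ (t : ℝ) : HasDerivAt hQ (hQ1 t) t := by
  have h := (((hasDerivAt_pow 2 t).sub_const 4).add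
      ((Real.hasDerivAt_cos t).const_mul 4)).add
      ((hasDerivAt_id t).mul (Real.hasDerivAt_sin t))
  refine h.congr_deriv ?_
  simp [hQ1, id_eq]
  ring

lemma hasDerivAt_hQ1 (t : ℝ) : HasDerivAt hQ1 (2 - 2*Real.cos t - t * Real.sin t) t := by
  have h := (((hasDerivAt_id t).const_mul 2).sub
      ((Real.hasDerivAt_sin t).const_mul 3)).add
      ((hasDerivAt_id t).mul (Real.hasDerivAt_cos t))
  refine h.congr_deriv ?_
  simp [id_eq]
  ring

lemma hQ1_deriv_pos {t : ℝ} (h0 : 0 < t) (h2 : t < 2*π) :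
    0 < 2 - 2*Real.cos t - t * Real.sin t := by
  have hu0 : 0 < t/2 := by linarith
  have huπ : t/2 < π := by linarith
  have hsin : 0 < Real.sin (t/2) := Real.sin_pos_of_pos_of_lt_pi hu0 huπ
  have hg : 0 < hG (t/2) := hG_pos hu0 huπ.le
  have hc : Real.cos t = 1 - 2 * Real.sin (t/2)^2 := by
    have h1 : Real.cos t = Real.cos (t/2)^2 - Real.sin (t/2)^2 := by
      nth_rewrite 1 [show t = 2*(t/2) by ring]
      exact Real.cos_two_mul' (t/2)
    have h2 := Real.sin_sq_add_cos_sq (t/2)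
    linarith
  have hst : Real.sin t = 2 * Real.sin (t/2) * Real.cos (t/2) := by
    nth_rewrite 1 [show t = 2*(t/2) by ring]
    exact Real.sin_two_mul (t/2)
  have key : 2 - 2*Real.cos t - t * Real.sin t = 4 * Real.sin (t/2) * hG (t/2) := by
    rw [hc, hst]; simp only [hG]; ring
  rw [key]
  positivity

lemma hQ1_pos {t : ℝ} (h0 : 0 < t) (h2 : t < 2*π) : 0 < hQ1 t := by
  have hmono : StrictMonoOn hQ1 (Icc 0 (2*π)) := by
    apply strictMonoOn_of_deriv_pos (convex_Icc _ _)
    · exact fun x hx => ((hasDerivAt_hQ1 x).continuousAt).continuousWithinAt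
    · intro x hx
      rw [interior_Icc] at hx
      rw [(hasDerivAt_hQ1 x).deriv]
      exact hQ1_deriv_pos hx.1 hx.2
  have h := hmono (by constructor <;> [rfl; positivity] : (0:ℝ) ∈ Icc 0 (2*π))
    ⟨h0.le, h2.le⟩ h0
  simpa [hQ1] using h

lemma hQ_pos {t : ℝ} (h0 : 0 < t) (h2 : t < 2*π) : 0 < hQ t := by
  have hmono : StrictMonoOn hQ (Icc 0 (2*π)) := by
    apply strictMonoOn_of_deriv_pos (convex_Icc _ _)
    · exact fun x hx => ((hasDerivAt_hQ x).continuousAt).continuousWithinAt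
    · intro x hx
      rw [interior_Icc] at hx
      rw [(hasDerivAt_hQ x).deriv]
      exact hQ1_pos hx.1 hx.2
  have h := hmono (by constructor <;> [rfl; positivity] : (0:ℝ) ∈ Icc 0 (2*π))
    ⟨h0.le, h2.le⟩ h0
  simpa [hQ] using h

lemma p_neg {x : ℝ} (h0 : 0 < x) (hπ : x < π) :
    2 * Real.sin x^2 - x * Real.sin x * Real.cos x - x^2 < 0 := by
  have hq := hQ_pos (t := 2*x) (by linarith) (by linarith)
  have hc : Real.cos (2*x) = 1 - 2 * Real.sin x^2 := by
    have h1 := Real.cos_two_mul' x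
    have h2 := Real.sin_sq_add_cos_sq x
    nlinarith [h1, h2]
  have hst : Real.sin (2*x) = 2 * Real.sin x * Real.cos x := Real.sin_two_mul x
  simp only [hQ, hc, hst] at hq
  nlinarith [hq]

noncomputable def hPsi (x : ℝ) : ℝ := x^2 * Real.sin x / hG x

lemma hasDerivAt_hPsi {x : ℝ} (hx : x ∈ Ioo 0 π) :
    HasDerivAt hPsi
      (((2*x*Real.sin x + x^2*Real.cos x) * hG x - x^2*Real.sin x*(x*Real.sin x)) / (hG x)^2)
      x := by
  have hGne : hG x ≠ 0 := (hG_pos hx.1 hx.2.le).ne'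
  have hu : HasDerivAt (fun y : ℝ => y^2 * Real.sin y) (2*x*Real.sin x + x^2*Real.cos x) x := by
    have h := (hasDerivAt_pow 2 x).mul (Real.hasDerivAt_sin x)
    refine h.congr_deriv ?_
    push_cast
    ring
  exact hu.div (hasDerivAt_hG x) hGne

lemma hPsi_strictAnti : StrictAntiOn hPsi (Ioo 0 π) := by
  apply strictAntiOn_of_deriv_neg (convex_Ioo _ _)
  · exact fun x hx => (hasDerivAt_hPsi hx).continuousAt.continuousWithinAt
  · intro x hx
    rw [interior_Ioo] at hx
    rw [(hasDerivAt_hPsi hx).deriv]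
    apply div_neg_of_neg_of_pos
    · have hnum : (2*x*Real.sin x + x^2*Real.cos x) * hG x - x^2*Real.sin x*(x*Real.sin x)
          = x * (2 * Real.sin x^2 - x * Real.sin x * Real.cos x - x^2) := by
        simp only [hG]
        linear_combination (-(x^3:ℝ)) * Real.sin_sq_add_cos_sq x
      rw [hnum]
      exact mul_neg_of_pos_of_neg hx.1 (p_neg hx.1 hx.2)
    · exact pow_pos (hG_pos hx.1 hx.2.le) 2

lemma numB {s x : ℝ} (hs0 : 0 < s) (hs1 : s < 1) (hx : x ∈ Ioo 0 π) :
    Real.sin x * hG (s*x) < s^2 * Real.sin (s*x) * hG x := by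
  have hsxx : s * x < x := by nlinarith [hx.1]
  have hsx : s*x ∈ Ioo 0 π := ⟨mul_pos hs0 hx.1, hsxx.trans hx.2⟩
  have h := hPsi_strictAnti hsx hx hsxx
  rw [hPsi, hPsi, div_lt_div_iff₀ (hG_pos hx.1 hx.2.le) (hG_pos hsx.1 hsx.2.le)] at h
  have h' : x^2 * (Real.sin x * hG (s*x)) < x^2 * (s^2 * Real.sin (s*x) * hG x) := by
    nlinarith [h]
  exact lt_of_mul_lt_mul_left h' (sq_nonneg x)

lemma ratioG_lt {s a b : ℝ} (hs0 : 0 < s) (hs1 : s < 1) (ha : 0 < a) (hab : a < b)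
    (hb : b < π) : hG (s*a) / hG a < hG (s*b) / hG b := by
  have hD : ∀ x ∈ Ioo (0:ℝ) π, HasDerivAt (fun y => hG (s*y) / hG y)
      (((s*x * Real.sin (s*x)) * (s*1) * hG x - hG (s*x) * (x * Real.sin x)) / (hG x)^2) x := by
    intro x hx
    have hGne : hG x ≠ 0 := (hG_pos hx.1 hx.2.le).ne'
    have hin : HasDerivAt (fun y : ℝ => hG (s*y)) ((s*x * Real.sin (s*x)) * (s*1)) x :=
      (hasDerivAt_hG (s*x)).comp x ((hasDerivAt_id x).const_mul s)
    exact hin.div (hasDerivAt_hG x) hGne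
  have hmono : StrictMonoOn (fun y => hG (s*y) / hG y) (Ioo 0 π) := by
    apply strictMonoOn_of_deriv_pos (convex_Ioo _ _)
    · exact fun x hx => (hD x hx).continuousAt.continuousWithinAt
    · intro x hx
      rw [interior_Ioo] at hx
      rw [(hD x hx).deriv]
      apply div_pos
      · have hnum : (s*x * Real.sin (s*x)) * (s*1) * hG x - hG (s*x) * (x * Real.sin x)
            = x * (s^2 * Real.sin (s*x) * hG x - Real.sin x * hG (s*x)) := by ring
        rw [hnum]
        exact mul_pos hx.1 (sub_pos.mpr (numB hs0 hs1 hx))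
      · exact pow_pos (hG_pos hx.1 hx.2.le) 2
  exact hmono ⟨ha, hab.trans hb⟩ ⟨ha.trans hab, hb⟩ hab

lemma hasDerivAt_sinS (s x : ℝ) :
    HasDerivAt (fun y : ℝ => Real.sin (s*y)) (Real.cos (s*x) * (s*1)) x :=
  (Real.hasDerivAt_sin (s*x)).comp x ((hasDerivAt_id x).const_mul s)

lemma hasDerivAt_cosS (s x : ℝ) :
    HasDerivAt (fun y : ℝ => Real.cos (s*y)) (-Real.sin (s*x) * (s*1)) x :=
  (Real.hasDerivAt_cos (s*x)).comp x ((hasDerivAt_id x).const_mul s)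

noncomputable def hH (s x : ℝ) : ℝ :=
  s * Real.cos (s*x) * Real.sin x - Real.sin (s*x) * Real.cos x

lemma hasDerivAt_hH (s x : ℝ) :
    HasDerivAt (hH s) ((1 - s^2) * (Real.sin (s*x) * Real.sin x)) x := by
  have h := ((((hasDerivAt_cosS s x).const_mul s).mul (Real.hasDerivAt_sin x)).sub
    ((hasDerivAt_sinS s x).mul (Real.hasDerivAt_cos x)))
  refine h.congr_deriv ?_
  ring

lemma hH_pos {s x : ℝ} (hs0 : 0 < s) (hs1 : s < 1) (hx : x ∈ Ioo 0 π) : 0 < hH s x := by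
  have hmono : StrictMonoOn (hH s) (Icc 0 π) := by
    apply strictMonoOn_of_deriv_pos (convex_Icc _ _)
    · exact fun y hy => (hasDerivAt_hH s y).continuousAt.continuousWithinAt
    · intro y hy
      rw [interior_Icc] at hy
      rw [(hasDerivAt_hH s y).deriv]
      have hsy : 0 < s * y := mul_pos hs0 hy.1
      have hsyπ : s * y < π := by nlinarith [hy.1, hy.2]
      have h1 := Real.sin_pos_of_pos_of_lt_pi hsy hsyπ
      have h2 := Real.sin_pos_of_pos_of_lt_pi hy.1 hy.2
      have hs2 : (0:ℝ) < 1 - s^2 := by nlinarith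
      exact mul_pos hs2 (mul_pos h1 h2)
  have h := hmono (by constructor <;> [rfl; exact Real.pi_nonneg] : (0:ℝ) ∈ Icc 0 π)
    ⟨hx.1.le, hx.2.le⟩ hx.1
  simpa [hH] using h

lemma ratioSin_lt {s a b : ℝ} (hs0 : 0 < s) (hs1 : s < 1) (ha : 0 < a) (hab : a < b)
    (hb : b < π) : Real.sin (s*a) / Real.sin a < Real.sin (s*b) / Real.sin b := by
  have hD : ∀ x ∈ Ioo (0:ℝ) π, HasDerivAt (fun y => Real.sin (s*y) / Real.sin y)
      ((Real.cos (s*x) * (s*1) * Real.sin x - Real.sin (s*x) * Real.cos x) / (Real.sin x)^2) x := by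
    intro x hx
    exact (hasDerivAt_sinS s x).div (Real.hasDerivAt_sin x)
      (Real.sin_pos_of_pos_of_lt_pi hx.1 hx.2).ne'
  have hmono : StrictMonoOn (fun y => Real.sin (s*y) / Real.sin y) (Ioo 0 π) := by
    apply strictMonoOn_of_deriv_pos (convex_Ioo _ _)
    · exact fun x hx => (hD x hx).continuousAt.continuousWithinAt
    · intro x hx
      rw [interior_Ioo] at hx
      rw [(hD x hx).deriv]
      apply div_pos
      · have : Real.cos (s*x) * (s*1) * Real.sin x - Real.sin (s*x) * Real.cos x = hH s x := by
          simp only [hH]; ring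
        rw [this]
        exact hH_pos hs0 hs1 hx
      · exact pow_pos (Real.sin_pos_of_pos_of_lt_pi hx.1 hx.2) 2
  exact hmono ⟨ha, hab.trans hb⟩ ⟨ha.trans hab, hb⟩ hab

noncomputable def hr (x : ℝ) : ℝ := x^2 * Real.sin x - 3*Real.sin x + 3*x*Real.cos x

lemma hasDerivAt_hr (x : ℝ) : HasDerivAt hr (-(x * hG x)) x := by
  have h1 : HasDerivAt (fun y : ℝ => y^2 * Real.sin y) (2*x*Real.sin x + x^2*Real.cos x) x := by
    have h := (hasDerivAt_pow 2 x).mul (Real.hasDerivAt_sin x)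
    refine h.congr_deriv ?_
    push_cast
    ring
  have h := (h1.sub ((Real.hasDerivAt_sin x).const_mul 3)).add
    (((hasDerivAt_id x).mul (Real.hasDerivAt_cos x)).const_mul 3)
  convert h using 1
  · rfl
  · rfl
  · funext y
    simp only [hr, id_eq, Pi.add_apply, Pi.sub_apply, Pi.mul_apply]
    ring
  · simp only [hG, id_eq]
    ring

lemma hr_neg {x : ℝ} (h0 : 0 < x) (hπ : x < π) : hr x < 0 := by
  have hmono : StrictAntiOn hr (Icc 0 π) := by
    apply strictAntiOn_of_deriv_neg (convex_Icc _ _)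
    · exact fun y hy => (hasDerivAt_hr y).continuousAt.continuousWithinAt
    · intro y hy
      rw [interior_Icc] at hy
      rw [(hasDerivAt_hr y).deriv]
      exact neg_neg_of_pos (mul_pos hy.1 (hG_pos hy.1 hy.2.le))
  have h := hmono (by constructor <;> [rfl; exact Real.pi_nonneg] : (0:ℝ) ∈ Icc 0 π)
    ⟨h0.le, hπ.le⟩ h0
  simpa [hr] using h

lemma hR_strictAnti : StrictAntiOn (fun x => hG x / x^3) (Ioo 0 π) := by
  apply strictAntiOn_of_deriv_neg (convex_Ioo _ _)
  · intro x hx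
    have hx3 : (x:ℝ)^3 ≠ 0 := by
      have := hx.1; positivity
    exact (ContinuousAt.div (hG_cont.continuousAt)
      ((continuous_pow 3).continuousAt) hx3).continuousWithinAt
  · intro x hx
    rw [interior_Ioo] at hx
    have hx3 : (x:ℝ)^3 ≠ 0 := by
      have := hx.1; positivity
    have hden : HasDerivAt (fun y : ℝ => y^3) (3*x^2) x := by
      simpa using hasDerivAt_pow 3 x
    have hD : HasDerivAt (fun x : ℝ => hG x / x^3)
        (((x * Real.sin x) * x^3 - hG x * (3*x^2)) / (x^3)^2) x :=
      (hasDerivAt_hG x).div hden hx3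
    rw [hD.deriv]
    apply div_neg_of_neg_of_pos
    · have : (x * Real.sin x) * x^3 - hG x * (3 * x^2) = x^2 * hr x := by
        simp only [hG, hr]; ring
      rw [this]
      have hx0 := hx.1
      exact mul_neg_of_pos_of_neg (by positivity) (hr_neg hx.1 hx.2)
    · have hx0 := hx.1
      positivity

lemma sin_smul_lt {s b : ℝ} (hs0 : 0 < s) (hs1 : s < 1) (hb : b ∈ Ioo 0 π) :
    s * Real.sin b < Real.sin (s * b) := by
  have h := strictConcaveOn_sin_Icc.2 (show (0:ℝ) ∈ Icc 0 π by simp [Real.pi_nonneg])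
    (show b ∈ Icc 0 π from ⟨hb.1.le, hb.2.le⟩) (ne_of_lt hb.1)
    (show (0:ℝ) < 1 - s by linarith) hs0 (by ring)
  simpa using h

lemma hG_smul_lt {s b : ℝ} (hs0 : 0 < s) (hs1 : s < 1) (hb : b ∈ Ioo 0 π) :
    s^3 * hG b < hG (s * b) := by
  have hsb : s * b < b := by nlinarith [hb.1]
  have hsb' : s * b ∈ Ioo 0 π := ⟨mul_pos hs0 hb.1, hsb.trans hb.2⟩
  have h := hR_strictAnti hsb' hb hsb
  simp only at h
  have hb3 : (0:ℝ) < b^3 := by have := hb.1; positivity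
  have hsb3 : (0:ℝ) < (s*b)^3 := by have := hsb'.1; positivity
  rw [div_lt_div_iff₀ hb3 hsb3] at h
  have h' : (s^3 * hG b) * b^3 < hG (s*b) * b^3 := by nlinarith [h]
  exact lt_of_mul_lt_mul_right h' hb3.le

lemma tau_pos_eq {n : ℕ} (hn : 1 ≤ n) {s θ : ℝ} (hs0 : 0 < s) (hθ0 : 0 < θ) (hθ2 : θ < 2*π)
    (hs1 : s < 1) :
    heisenbergTau n s θ =
      (s * (Real.sin (s*(θ/2)) / Real.sin (θ/2)) ^ (2*n-1) * (hG (s*(θ/2)) / hG (θ/2)))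
        ^ ((1:ℝ)/(2*(n:ℝ)+1)) := by
  have hx : θ/2 ∈ Ioo 0 π := ⟨by linarith, by linarith⟩
  have hsx : s*(θ/2) ∈ Ioo 0 π := ⟨mul_pos hs0 hx.1, by nlinarith [hx.1, hx.2]⟩
  have hR1 : (0:ℝ) ≤ Real.sin (s*(θ/2)) / Real.sin (θ/2) :=
    le_of_lt (div_pos (Real.sin_pos_of_pos_of_lt_pi hsx.1 hsx.2)
      (Real.sin_pos_of_pos_of_lt_pi hx.1 hx.2))
  have hR3 : (0:ℝ) ≤ hG (s*(θ/2)) / hG (θ/2) :=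
    le_of_lt (div_pos (hG_pos hsx.1 hsx.2.le) (hG_pos hx.1 hx.2.le))
  have hc : (0:ℝ) < 2*(n:ℝ)+1 := by positivity
  have hmc : ((2*n-1 : ℕ) : ℝ) = 2*(n:ℝ) - 1 := by
    have : (1:ℕ) ≤ 2*n := by omega
    push_cast [Nat.cast_sub this]
    ring
  rw [heisenbergTau, if_neg hθ0.ne']
  rw [show θ * s / 2 = s * (θ/2) by ring]
  rw [Real.mul_rpow (by positivity) hR3, Real.mul_rpow hs0.le (by positivity)]
  congr 1
  rw [← Real.rpow_natCast (Real.sin (s*(θ/2)) / Real.sin (θ/2)) (2*n-1),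
    ← Real.rpow_mul hR1, hmc]
  congr 1
  field_simp

/-- For every integer `n ≥ 1` and every `s ∈ (0,1)`, the Heisenberg distortion coefficient
`τ_s^n` is strictly increasing on `[0, 2π)`. -/
theorem heisenbergTau_strictMono (n : ℕ) (hn : 1 ≤ n) (s : ℝ) (hs : s ∈ Set.Ioo (0 : ℝ) 1)
    (θ₁ θ₂ : ℝ) (hθ₁ : 0 ≤ θ₁) (h12 : θ₁ < θ₂) (hθ₂ : θ₂ < 2 * Real.pi) :
    heisenbergTau n s θ₁ < heisenbergTau n s θ₂ := by
  obtain ⟨hs0, hs1⟩ := hs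
  have hc : (0:ℝ) < (1:ℝ)/(2*(n:ℝ)+1) := by positivity
  have hb : θ₂/2 ∈ Ioo 0 π := ⟨by linarith, by linarith⟩
  have hsb : s*(θ₂/2) ∈ Ioo 0 π := ⟨mul_pos hs0 hb.1, by nlinarith [hb.1, hb.2]⟩
  have hsinb := Real.sin_pos_of_pos_of_lt_pi hb.1 hb.2
  have hsinsb := Real.sin_pos_of_pos_of_lt_pi hsb.1 hsb.2
  have hGb := hG_pos hb.1 hb.2.le
  have hGsb := hG_pos hsb.1 hsb.2.le
  have hR1b : (0:ℝ) < Real.sin (s*(θ₂/2)) / Real.sin (θ₂/2) := div_pos hsinsb hsinb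
  have hR3b : (0:ℝ) < hG (s*(θ₂/2)) / hG (θ₂/2) := div_pos hGsb hGb
  have hm0 : 2*n-1 ≠ 0 := by omega
  rw [tau_pos_eq hn hs0 (hθ₁.trans_lt h12) hθ₂ hs1]
  rcases eq_or_lt_of_le hθ₁ with h0 | h0
  · -- θ₁ = 0
    subst h0
    rw [heisenbergTau, if_pos rfl]
    have hk : s * s^(2*n-1) * s^3 = s^(2*n+3) := by
      nth_rewrite 1 [← pow_one s]
      rw [← pow_add, ← pow_add]
      congr 1
      omega
    have hτ0 : s ^ ((2*(n:ℝ)+3)/(2*(n:ℝ)+1))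
        = (s * s^(2*n-1) * s^3) ^ ((1:ℝ)/(2*(n:ℝ)+1)) := by
      rw [hk, ← Real.rpow_natCast s (2*n+3), ← Real.rpow_mul hs0.le]
      congr 1
      push_cast
      ring
    rw [hτ0]
    apply Real.rpow_lt_rpow (by positivity) ?_ hc
    have h1 : s < Real.sin (s*(θ₂/2)) / Real.sin (θ₂/2) :=
      (lt_div_iff₀ hsinb).mpr (sin_smul_lt hs0 hs1 hb)
    have h3 : s^3 < hG (s*(θ₂/2)) / hG (θ₂/2) :=
      (lt_div_iff₀ hGb).mpr (hG_smul_lt hs0 hs1 hb)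
    have h1m : s^(2*n-1) < (Real.sin (s*(θ₂/2)) / Real.sin (θ₂/2))^(2*n-1) :=
      pow_lt_pow_left₀ h1 hs0.le hm0
    calc s * s^(2*n-1) * s^3
        < s * (Real.sin (s*(θ₂/2)) / Real.sin (θ₂/2))^(2*n-1) * s^3 :=
          mul_lt_mul_of_pos_right (mul_lt_mul_of_pos_left h1m hs0) (by positivity)
      _ < s * (Real.sin (s*(θ₂/2)) / Real.sin (θ₂/2))^(2*n-1) * (hG (s*(θ₂/2)) / hG (θ₂/2)) :=
          mul_lt_mul_of_pos_left h3 (by positivity)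
  · -- 0 < θ₁
    rw [tau_pos_eq hn hs0 h0 (h12.trans hθ₂) hs1]
    have ha : θ₁/2 ∈ Ioo 0 π := ⟨by linarith, by linarith⟩
    have hsa : s*(θ₁/2) ∈ Ioo 0 π := ⟨mul_pos hs0 ha.1, by nlinarith [ha.1, ha.2]⟩
    have hR1a : (0:ℝ) < Real.sin (s*(θ₁/2)) / Real.sin (θ₁/2) :=
      div_pos (Real.sin_pos_of_pos_of_lt_pi hsa.1 hsa.2)
        (Real.sin_pos_of_pos_of_lt_pi ha.1 ha.2)
    have hR3a : (0:ℝ) < hG (s*(θ₁/2)) / hG (θ₁/2) :=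
      div_pos (hG_pos hsa.1 hsa.2.le) (hG_pos ha.1 ha.2.le)
    apply Real.rpow_lt_rpow (by positivity) ?_ hc
    have hab : θ₁/2 < θ₂/2 := by linarith
    have h1 := ratioSin_lt hs0 hs1 ha.1 hab hb.2
    have h3 := ratioG_lt hs0 hs1 ha.1 hab hb.2
    have h1m : (Real.sin (s*(θ₁/2)) / Real.sin (θ₁/2))^(2*n-1)
        < (Real.sin (s*(θ₂/2)) / Real.sin (θ₂/2))^(2*n-1) :=
      pow_lt_pow_left₀ h1 hR1a.le hm0
    calc s * (Real.sin (s*(θ₁/2)) / Real.sin (θ₁/2))^(2*n-1) * (hG (s*(θ₁/2)) / hG (θ₁/2))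
        < s * (Real.sin (s*(θ₂/2)) / Real.sin (θ₂/2))^(2*n-1) * (hG (s*(θ₁/2)) / hG (θ₁/2)) :=
          mul_lt_mul_of_pos_right (mul_lt_mul_of_pos_left h1m hs0) hR3a
      _ < s * (Real.sin (s*(θ₂/2)) / Real.sin (θ₂/2))^(2*n-1) * (hG (s*(θ₂/2)) / hG (θ₂/2)) :=
          mul_lt_mul_of_pos_left h3 (by positivity)
end

section
/- For every s ∈ (0,1), the function t ↦ sin(st)/sin(t) is strictly increasing on the open interval (0,π). -/
open Real Set

private lemma hasDerivAt_g (s t : ℝ) :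
    HasDerivAt (fun t : ℝ => s * Real.cos (s * t) * Real.sin t - Real.sin (s * t) * Real.cos t)
      ((1 - s ^ 2) * Real.sin (s * t) * Real.sin t) t := by
  have h1 : HasDerivAt (fun t : ℝ => Real.sin (s * t)) (s * Real.cos (s * t)) t := by
    simpa [mul_comm, Function.comp_def] using (Real.hasDerivAt_sin (s * t)).comp t ((hasDerivAt_id t).const_mul s)
  have h2 : HasDerivAt (fun t : ℝ => Real.cos (s * t)) (-(s * Real.sin (s * t))) t := by
    simpa [mul_comm, Function.comp_def] using (Real.hasDerivAt_cos (s * t)).comp t ((hasDerivAt_id t).const_mul s)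
  have := ((h2.const_mul s).mul (Real.hasDerivAt_sin t)).sub
    (h1.mul (Real.hasDerivAt_cos t))
  exact this.congr_deriv (by ring)

private lemma g_pos (s : ℝ) (hs : s ∈ Set.Ioo (0 : ℝ) 1) {t : ℝ} (ht : t ∈ Set.Ioo 0 Real.pi) :
    0 < s * Real.cos (s * t) * Real.sin t - Real.sin (s * t) * Real.cos t := by
  set g : ℝ → ℝ := fun t => s * Real.cos (s * t) * Real.sin t - Real.sin (s * t) * Real.cos t
  have hmono : StrictMonoOn g (Set.Icc 0 Real.pi) := by
    apply strictMonoOn_of_deriv_pos (convex_Icc _ _)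
    · exact Continuous.continuousOn (by continuity)
    · intro x hx
      rw [interior_Icc] at hx
      rw [(hasDerivAt_g s x).deriv]
      have hsx : Real.sin (s * x) > 0 := by
        apply Real.sin_pos_of_pos_of_lt_pi (mul_pos hs.1 hx.1)
        calc s * x < 1 * x := mul_lt_mul_of_pos_right hs.2 hx.1
          _ = x := one_mul x
          _ < Real.pi := hx.2
      have hx2 : Real.sin x > 0 := Real.sin_pos_of_pos_of_lt_pi hx.1 hx.2
      have : (0:ℝ) < 1 - s ^ 2 := by nlinarith [hs.1, hs.2]
      positivity
  have h0 : g 0 = 0 := by simp [g]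
  have := hmono (Set.left_mem_Icc.2 Real.pi_pos.le)
    (Set.mem_Icc.2 ⟨ht.1.le, ht.2.le⟩) ht.1
  simpa [g, h0, sub_pos] using this

/-- For every `s ∈ (0,1)`, the function `t ↦ sin(s t)/sin t` is strictly increasing on `(0, π)`. -/
theorem strictMonoOn_sin_ratio (s : ℝ) (hs : s ∈ Set.Ioo (0 : ℝ) 1) :
    StrictMonoOn (fun t : ℝ => Real.sin (s * t) / Real.sin t) (Set.Ioo 0 Real.pi) := by
  apply strictMonoOn_of_deriv_pos (convex_Ioo _ _)
  · apply ContinuousOn.div (Continuous.continuousOn (by continuity))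
      Real.continuousOn_sin
    intro x hx
    exact (Real.sin_pos_of_pos_of_lt_pi hx.1 hx.2).ne'
  · intro x hx
    rw [interior_Ioo] at hx
    have hsinx : 0 < Real.sin x := Real.sin_pos_of_pos_of_lt_pi hx.1 hx.2
    have h1 : HasDerivAt (fun t : ℝ => Real.sin (s * t)) (s * Real.cos (s * x)) x := by
      simpa [mul_comm, Function.comp_def] using (Real.hasDerivAt_sin (s * x)).comp x ((hasDerivAt_id x).const_mul s)
    have hd : HasDerivAt (fun t : ℝ => Real.sin (s * t) / Real.sin t)
        ((s * Real.cos (s * x) * Real.sin x - Real.sin (s * x) * Real.cos x) / Real.sin x ^ 2)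
        x := h1.div (Real.hasDerivAt_sin x) hsinx.ne'
    rw [hd.deriv]
    exact div_pos (g_pos s hs hx) (by positivity)
end

section
/- For every s ∈ (0,1), the function t ↦ (sin(st) − s·t·cos(st))/(sin(t) − t·cos(t)) is strictly increasing on the open interval (0,π). -/
open Real Set

namespace SinSubCosRatio

/-- derivative of `F t = sin t - t cos t` is `t * sin t`. -/
lemma hasDerivAt_F (t : ℝ) :
    HasDerivAt (fun x : ℝ => Real.sin x - x * Real.cos x) (t * Real.sin t) t := by
  have h := (Real.hasDerivAt_sin t).sub ((hasDerivAt_id t).mul (Real.hasDerivAt_cos t))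
  refine h.congr_deriv ?_
  simp only [id_eq]
  ring

lemma F_pos {t : ℝ} (ht0 : 0 < t) (htpi : t ≤ π) :
    0 < Real.sin t - t * Real.cos t := by
  have hmono : StrictMonoOn (fun x : ℝ => Real.sin x - x * Real.cos x) (Icc 0 π) := by
    apply strictMonoOn_of_deriv_pos (convex_Icc 0 π)
    · exact (Real.continuous_sin.sub (continuous_id.mul Real.continuous_cos)).continuousOn
    · intro x hx
      rw [interior_Icc] at hx
      rw [(hasDerivAt_F x).deriv]
      exact mul_pos hx.1 (Real.sin_pos_of_pos_of_lt_pi hx.1 hx.2)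
  have h0 : (fun x : ℝ => Real.sin x - x * Real.cos x) 0 <
      (fun x : ℝ => Real.sin x - x * Real.cos x) t :=
    hmono ⟨le_refl 0, Real.pi_pos.le⟩ ⟨ht0.le, htpi⟩ ht0
  simpa using h0

/-- Q t = t² + t sin t cos t − 2 sin²t, Q' = Q1. -/
lemma hasDerivAt_Q1 (t : ℝ) :
    HasDerivAt (fun x : ℝ => 2 * x - 3 * Real.sin x * Real.cos x
        + x * Real.cos x ^ 2 - x * Real.sin x ^ 2)
      (4 * Real.sin t * (Real.sin t - t * Real.cos t)) t := by
  have h1 : HasDerivAt (fun x : ℝ => 2 * x) 2 t := by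
    simpa using (hasDerivAt_id t).const_mul 2
  have h2 : HasDerivAt (fun x : ℝ => 3 * Real.sin x * Real.cos x)
      (3 * (Real.cos t * Real.cos t + Real.sin t * (-Real.sin t))) t := by
    have := ((Real.hasDerivAt_sin t).mul (Real.hasDerivAt_cos t)).const_mul 3
    refine (this.congr_deriv ?_).congr_of_eventuallyEq (Filter.Eventually.of_forall fun x => ?_)
    · ring
    · simp only [Pi.mul_apply]; ring
  have h3 : HasDerivAt (fun x : ℝ => x * Real.cos x ^ 2)
      (Real.cos t ^ 2 + t * (2 * Real.cos t * (-Real.sin t))) t := by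
    have hc : HasDerivAt (fun x : ℝ => Real.cos x ^ 2)
        (2 * Real.cos t * (-Real.sin t)) t := by
      exact ((Real.hasDerivAt_cos t).pow 2).congr_deriv (by simp)
    have := (hasDerivAt_id t).mul hc
    refine this.congr_deriv ?_
    simp only [id_eq]
    ring
  have h4 : HasDerivAt (fun x : ℝ => x * Real.sin x ^ 2)
      (Real.sin t ^ 2 + t * (2 * Real.sin t * Real.cos t)) t := by
    have hc : HasDerivAt (fun x : ℝ => Real.sin x ^ 2)
        (2 * Real.sin t * Real.cos t) t := by
      exact ((Real.hasDerivAt_sin t).pow 2).congr_deriv (by simp)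
    have := (hasDerivAt_id t).mul hc
    refine this.congr_deriv ?_
    simp only [id_eq]
    ring
  have h := ((h1.sub h2).add h3).sub h4
  refine h.congr_deriv ?_
  have hpy : Real.sin t ^ 2 + Real.cos t ^ 2 = 1 := Real.sin_sq_add_cos_sq t
  nlinarith [hpy]

lemma hasDerivAt_Q (t : ℝ) :
    HasDerivAt (fun x : ℝ => x ^ 2 + x * Real.sin x * Real.cos x - 2 * Real.sin x ^ 2)
      (2 * t - 3 * Real.sin t * Real.cos t
        + t * Real.cos t ^ 2 - t * Real.sin t ^ 2) t := by
  have h1 : HasDerivAt (fun x : ℝ => x ^ 2) (2 * t) t := by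
    simpa using hasDerivAt_pow 2 t
  have h2 : HasDerivAt (fun x : ℝ => x * Real.sin x * Real.cos x)
      ((Real.sin t + t * Real.cos t) * Real.cos t + t * Real.sin t * (-Real.sin t)) t := by
    have := (((hasDerivAt_id t).mul (Real.hasDerivAt_sin t)).mul (Real.hasDerivAt_cos t))
    refine this.congr_deriv ?_
    simp only [id_eq, Pi.mul_apply]
    ring
  have h3 : HasDerivAt (fun x : ℝ => 2 * Real.sin x ^ 2)
      (2 * (2 * Real.sin t * Real.cos t)) t := by
    simpa using ((Real.hasDerivAt_sin t).pow 2).const_mul 2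
  have h := (h1.add h2).sub h3
  refine h.congr_deriv ?_
  ring

lemma Q1_pos {t : ℝ} (ht0 : 0 < t) (htpi : t ≤ π) :
    0 < 2 * t - 3 * Real.sin t * Real.cos t + t * Real.cos t ^ 2 - t * Real.sin t ^ 2 := by
  have hmono : StrictMonoOn (fun x : ℝ => 2 * x - 3 * Real.sin x * Real.cos x
      + x * Real.cos x ^ 2 - x * Real.sin x ^ 2) (Icc 0 π) := by
    apply strictMonoOn_of_deriv_pos (convex_Icc 0 π)
    · fun_prop
    · intro x hx
      rw [interior_Icc] at hx
      rw [(hasDerivAt_Q1 x).deriv]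
      have hs := Real.sin_pos_of_pos_of_lt_pi hx.1 hx.2
      have hf := F_pos hx.1 hx.2.le
      positivity
  have h0 := hmono (left_mem_Icc.2 Real.pi_pos.le) ⟨ht0.le, htpi⟩ ht0
  simpa using h0

lemma Q_pos {t : ℝ} (ht0 : 0 < t) (htpi : t ≤ π) :
    0 < t ^ 2 + t * Real.sin t * Real.cos t - 2 * Real.sin t ^ 2 := by
  have hmono : StrictMonoOn
      (fun x : ℝ => x ^ 2 + x * Real.sin x * Real.cos x - 2 * Real.sin x ^ 2) (Icc 0 π) := by
    apply strictMonoOn_of_deriv_pos (convex_Icc 0 π)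
    · fun_prop
    · intro x hx
      rw [interior_Icc] at hx
      rw [(hasDerivAt_Q x).deriv]
      exact Q1_pos hx.1 hx.2.le
  have h0 := hmono (left_mem_Icc.2 Real.pi_pos.le) ⟨ht0.le, htpi⟩ ht0
  simpa using h0

/-- `ψ t = t² sin t / (sin t - t cos t)` is strictly decreasing on `(0, π)`. -/
lemma strictAntiOn_psi :
    StrictAntiOn (fun t : ℝ => t ^ 2 * Real.sin t / (Real.sin t - t * Real.cos t))
      (Ioo 0 π) := by
  apply strictAntiOn_of_deriv_neg (convex_Ioo 0 π)
  · apply ContinuousOn.div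
    · fun_prop
    · fun_prop
    · intro x hx
      exact (F_pos hx.1 hx.2.le).ne'
  · intro t ht
    rw [interior_Ioo] at ht
    have hF := F_pos ht.1 ht.2.le
    have hnum : HasDerivAt (fun x : ℝ => x ^ 2 * Real.sin x)
        (2 * t * Real.sin t + t ^ 2 * Real.cos t) t := by
      have := (hasDerivAt_pow 2 t).mul (Real.hasDerivAt_sin t)
      refine this.congr_deriv ?_
      ring
    have hd : HasDerivAt
        (fun x : ℝ => x ^ 2 * Real.sin x / (Real.sin x - x * Real.cos x))
        (((2 * t * Real.sin t + t ^ 2 * Real.cos t) * (Real.sin t - t * Real.cos t)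
          - t ^ 2 * Real.sin t * (t * Real.sin t)) / (Real.sin t - t * Real.cos t) ^ 2) t :=
      hnum.div (hasDerivAt_F t) hF.ne'
    rw [hd.deriv]
    apply div_neg_of_neg_of_pos _ (by positivity)
    have hQ := Q_pos ht.1 ht.2.le
    have hpy : Real.sin t ^ 2 + Real.cos t ^ 2 = 1 := Real.sin_sq_add_cos_sq t
    have hN : (2 * t * Real.sin t + t ^ 2 * Real.cos t) * (Real.sin t - t * Real.cos t)
        - t ^ 2 * Real.sin t * (t * Real.sin t)
        = -(t * (t ^ 2 + t * Real.sin t * Real.cos t - 2 * Real.sin t ^ 2)) := by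
      linear_combination (-(t ^ 3)) * hpy
    rw [hN]
    linarith [mul_pos ht.1 hQ]

end SinSubCosRatio

/-- For every `s ∈ (0,1)`, the function
`t ↦ (sin(s t) − s t cos(s t)) / (sin t − t cos t)` is strictly increasing on `(0, π)`. -/
theorem strictMonoOn_sin_sub_cos_ratio (s : ℝ) (hs : s ∈ Set.Ioo (0 : ℝ) 1) :
    StrictMonoOn
      (fun t : ℝ =>
        (Real.sin (s * t) - s * t * Real.cos (s * t)) / (Real.sin t - t * Real.cos t))
      (Set.Ioo 0 Real.pi) := by
  obtain ⟨hs0, hs1⟩ := hs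
  apply strictMonoOn_of_deriv_pos (convex_Ioo 0 π)
  · apply ContinuousOn.div
    · fun_prop
    · fun_prop
    · intro x hx
      exact (SinSubCosRatio.F_pos hx.1 hx.2.le).ne'
  · intro t ht
    rw [interior_Ioo] at ht
    obtain ⟨ht0, htpi⟩ := ht
    have hst0 : 0 < s * t := mul_pos hs0 ht0
    have hstpi : s * t < π := by
      calc s * t < 1 * t := by nlinarith
      _ = t := one_mul t
      _ < π := htpi
    have hFt := SinSubCosRatio.F_pos ht0 htpi.le
    have hFst := SinSubCosRatio.F_pos hst0 hstpi.le
    -- derivative of the numerator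
    have hnum : HasDerivAt (fun x : ℝ => Real.sin (s * x) - s * x * Real.cos (s * x))
        (s ^ 2 * t * Real.sin (s * t)) t := by
      have hin : HasDerivAt (fun x : ℝ => s * x) s t := by
        simpa using (hasDerivAt_id t).const_mul s
      have := (SinSubCosRatio.hasDerivAt_F (s * t)).comp t hin
      refine this.congr_deriv ?_
      ring
    have hd : HasDerivAt
        (fun x : ℝ =>
          (Real.sin (s * x) - s * x * Real.cos (s * x)) / (Real.sin x - x * Real.cos x))
        ((s ^ 2 * t * Real.sin (s * t) * (Real.sin t - t * Real.cos t)
          - (Real.sin (s * t) - s * t * Real.cos (s * t)) * (t * Real.sin t))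
          / (Real.sin t - t * Real.cos t) ^ 2) t :=
      hnum.div (SinSubCosRatio.hasDerivAt_F t) hFt.ne'
    rw [hd.deriv]
    apply div_pos _ (by positivity)
    -- use monotonicity of ψ
    have hpsi := SinSubCosRatio.strictAntiOn_psi ⟨hst0, hstpi⟩ ⟨ht0, htpi⟩
      (by nlinarith : s * t < t)
    simp only at hpsi
    rw [div_lt_div_iff₀ hFt hFst] at hpsi
    nlinarith [mul_pos ht0 hFst, mul_pos ht0 hFt]
end

section
/- For every s ∈ (0,1) and every t ∈ (0,π), one has the identity s·cot(s·t) − cot(t) = 2π²·t·(1−s²)·Σ_{k=1}^∞ k²/((π²k² − t²)·(π²k² − s²t²)), where the series on the right-hand side converges. -/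
open Real Filter Topology

/-- Partial-fraction expansion of cotangent on `(0, π)`. -/
lemma cot_hasSum_aux (x : ℝ) (hx : x ∈ Set.Ioo (0 : ℝ) Real.pi) :
    HasSum (fun k : ℕ => 2 * x / (x ^ 2 - Real.pi ^ 2 * ((k : ℝ) + 1) ^ 2))
      (Real.cot x - 1 / x) := by
  obtain ⟨hx0, hxπ⟩ := hx
  obtain ⟨c, hxc, hcπ⟩ : ∃ c, x < c ∧ c < Real.pi :=
    ⟨(x + Real.pi) / 2, by linarith, by linarith⟩
  have hc0 : 0 < c := lt_trans hx0 hxc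
  have hc2 : c ^ 2 < Real.pi ^ 2 := by nlinarith
  set g : ℕ → ℝ → ℝ := fun k y => Real.log (1 - y ^ 2 / (Real.pi ^ 2 * ((k : ℝ) + 1) ^ 2))
  set g' : ℕ → ℝ → ℝ := fun k y => 2 * y / (y ^ 2 - Real.pi ^ 2 * ((k : ℝ) + 1) ^ 2)
  set u : ℕ → ℝ := fun k => 2 * c / ((Real.pi ^ 2 - c ^ 2) * ((k : ℝ) + 1) ^ 2)
  have hT : IsOpen (Set.Ioo (-c) c) := isOpen_Ioo
  have hTc : IsPreconnected (Set.Ioo (-c) c) := (convex_Ioo _ _).isPreconnected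
  have hxT : x ∈ Set.Ioo (-c) c := ⟨by linarith, hxc⟩
  have h0T : (0 : ℝ) ∈ Set.Ioo (-c) c := ⟨by linarith, hc0⟩
  -- positivity of the factors
  have hfac : ∀ (k : ℕ) (y : ℝ), y ∈ Set.Ioo (-c) c →
      0 < 1 - y ^ 2 / (Real.pi ^ 2 * ((k : ℝ) + 1) ^ 2) := by
    intro k y hy
    have hy2 : y ^ 2 < c ^ 2 := sq_lt_sq' hy.1 hy.2
    have hk : (1 : ℝ) ≤ ((k : ℝ) + 1) ^ 2 := by
      have hk0 : (0 : ℝ) ≤ (k : ℝ) := Nat.cast_nonneg k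
      nlinarith
    have hden : 0 < Real.pi ^ 2 * ((k : ℝ) + 1) ^ 2 := by positivity
    rw [sub_pos, div_lt_one hden]
    nlinarith
  -- summability of the bound
  have hu : Summable u := by
    have h1 : Summable (fun k : ℕ => 1 / ((k : ℝ) + 1) ^ 2) := by
      have := (summable_nat_add_iff 1).mpr <| Real.summable_one_div_nat_pow.mpr one_lt_two
      simpa using this
    have := h1.mul_left (2 * c / (Real.pi ^ 2 - c ^ 2))
    refine this.congr fun k => ?_
    simp only [u]
    rw [div_mul_div_comm, mul_one]
  -- derivatives
  have hg : ∀ (k : ℕ) (y : ℝ), y ∈ Set.Ioo (-c) c → HasDerivAt (g k) (g' k y) y := by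
    intro k y hy
    have hden : (0 : ℝ) < Real.pi ^ 2 * ((k : ℝ) + 1) ^ 2 := by positivity
    have hd : HasDerivAt (fun y : ℝ => 1 - y ^ 2 / (Real.pi ^ 2 * ((k : ℝ) + 1) ^ 2))
        (-(2 * y / (Real.pi ^ 2 * ((k : ℝ) + 1) ^ 2))) y := by
      have := ((hasDerivAt_pow 2 y).div_const (Real.pi ^ 2 * ((k : ℝ) + 1) ^ 2)).const_sub 1
      simpa using this
    have hpos := hfac k y hy
    have hlt : y ^ 2 < Real.pi ^ 2 * ((k : ℝ) + 1) ^ 2 :=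
      (div_lt_one hden).mp (sub_pos.mp hpos)
    have h2 : y ^ 2 - Real.pi ^ 2 * ((k : ℝ) + 1) ^ 2 ≠ 0 :=
      sub_ne_zero.mpr (ne_of_lt hlt)
    have := hd.log (ne_of_gt hpos)
    convert this using 1
    simp only [g']
    rw [div_eq_div_iff h2 (ne_of_gt hpos)]
    field_simp
    ring
  -- bound on derivatives
  have hg' : ∀ (k : ℕ) (y : ℝ), y ∈ Set.Ioo (-c) c → ‖g' k y‖ ≤ u k := by
    intro k y hy
    have hy2 : y ^ 2 < c ^ 2 := sq_lt_sq' hy.1 hy.2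
    have hk : (1 : ℝ) ≤ ((k : ℝ) + 1) ^ 2 := by
      have hk0 : (0 : ℝ) ≤ (k : ℝ) := Nat.cast_nonneg k
      nlinarith
    have hd1 : (Real.pi ^ 2 - c ^ 2) * ((k : ℝ) + 1) ^ 2
        ≤ Real.pi ^ 2 * ((k : ℝ) + 1) ^ 2 - y ^ 2 := by nlinarith
    have hd0 : (0 : ℝ) < (Real.pi ^ 2 - c ^ 2) * ((k : ℝ) + 1) ^ 2 := by
      have : (0:ℝ) < Real.pi ^ 2 - c ^ 2 := by linarith
      positivity
    have habs : |y ^ 2 - Real.pi ^ 2 * ((k : ℝ) + 1) ^ 2|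
        = Real.pi ^ 2 * ((k : ℝ) + 1) ^ 2 - y ^ 2 := by
      rw [abs_of_neg (by nlinarith)]; ring
    simp only [g', u, Real.norm_eq_abs, abs_div, habs, abs_mul]
    rw [abs_two]
    have hyc : |y| ≤ c := le_of_lt (abs_lt.mpr ⟨hy.1, hy.2⟩)
    exact div_le_div₀ (by positivity) (by nlinarith) hd0 hd1
  -- summability at 0
  have hg0 : Summable (fun k => g k 0) := by
    simp only [g]
    simpa using summable_zero
  -- the tsum of g equals log (sin y / y) on (0, c)
  have heq : ∀ y ∈ Set.Ioo (0 : ℝ) c, (∑' k, g k y) = Real.log (Real.sin y / y) := by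
    intro y hy
    have hy0 : 0 < y := hy.1
    have hyπ : y < Real.pi := lt_trans hy.2 hcπ
    have hyT : y ∈ Set.Ioo (-c) c := ⟨by linarith, hy.2⟩
    have hsy : 0 < Real.sin y := Real.sin_pos_of_pos_of_lt_pi hy0 hyπ
    have hsum : Summable (fun k => g k y) :=
      summable_of_summable_hasDerivAt_of_isPreconnected hu hT hTc hg hg' h0T hg0 hyT
    -- Euler product
    have hE := Real.tendsto_euler_sin_prod (y / Real.pi)
    have hπ : Real.pi ≠ 0 := Real.pi_ne_zero
    have h1 : Real.pi * (y / Real.pi) = y := by field_simp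
    rw [h1] at hE
    have hE1 : Tendsto (fun n : ℕ => y * ∏ j ∈ Finset.range n,
        ((1 : ℝ) - y ^ 2 / (Real.pi ^ 2 * ((j : ℝ) + 1) ^ 2))) atTop (𝓝 (Real.sin y)) := by
      refine hE.congr fun n => ?_
      congr 1
      refine Finset.prod_congr rfl fun j _ => ?_
      rw [div_pow, div_div]
    have hE2 : Tendsto (fun n : ℕ => ∏ j ∈ Finset.range n,
        ((1 : ℝ) - y ^ 2 / (Real.pi ^ 2 * ((j : ℝ) + 1) ^ 2))) atTop (𝓝 (Real.sin y / y)) := by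
      have := hE1.div_const y
      refine this.congr fun n => ?_
      exact mul_div_cancel_left₀ _ (ne_of_gt hy0)
    have hlog : Tendsto (fun n : ℕ => ∑ j ∈ Finset.range n, g j y) atTop
        (𝓝 (Real.log (Real.sin y / y))) := by
      have hcont : ContinuousAt Real.log (Real.sin y / y) :=
        Real.continuousAt_log (by positivity)
      have := hcont.tendsto.comp hE2
      refine this.congr fun n => ?_
      rw [Function.comp_apply, Real.log_prod]
      intro j _
      exact ne_of_gt (hfac j y hyT)
    exact tendsto_nhds_unique hsum.hasSum.tendsto_sum_nat hlog
  -- differentiate the tsum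
  have key : HasDerivAt (fun z => ∑' k, g k z) (∑' k, g' k x) x :=
    hasDerivAt_tsum_of_isPreconnected hu hT hTc hg hg' h0T hg0 hxT
  have hmem : Set.Ioo (0 : ℝ) c ∈ 𝓝 x := isOpen_Ioo.mem_nhds ⟨hx0, hxc⟩
  have hEv : (fun y => Real.log (Real.sin y / y)) =ᶠ[𝓝 x] (fun z => ∑' k, g k z) :=
    Filter.eventuallyEq_of_mem hmem fun y hy => (heq y hy).symm
  have key2 : HasDerivAt (fun y => Real.log (Real.sin y / y)) (∑' k, g' k x) x :=
    key.congr_of_eventuallyEq hEv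
  -- direct derivative of log (sin y / y)
  have hsx : 0 < Real.sin x := Real.sin_pos_of_pos_of_lt_pi hx0 hxπ
  have key3 : HasDerivAt (fun y => Real.log (Real.sin y / y)) (Real.cot x - 1 / x) x := by
    have hdiv : HasDerivAt (fun y : ℝ => Real.sin y / y)
        ((Real.cos x * x - Real.sin x * 1) / x ^ 2) x :=
      (Real.hasDerivAt_sin x).div (hasDerivAt_id x) (ne_of_gt hx0)
    have := hdiv.log (by positivity)
    convert this using 1
    rw [Real.cot_eq_cos_div_sin]
    field_simp
  have hval : (∑' k, g' k x) = Real.cot x - 1 / x := key2.unique key3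
  have hsx' : Summable (fun k => g' k x) :=
    hu.of_norm_bounded fun k => hg' k x hxT
  exact hval ▸ hsx'.hasSum

/-- Mittag-Leffler-type identity: for `s ∈ (0,1)` and `t ∈ (0,π)`,
`s cot(s t) − cot t = 2π² t (1−s²) Σ_{k≥1} k² / ((π²k² − t²)(π²k² − s²t²))`,
and the series converges. -/
theorem cot_diff_series (s t : ℝ) (hs : s ∈ Set.Ioo (0 : ℝ) 1) (ht : t ∈ Set.Ioo 0 Real.pi) :
    Summable (fun k : ℕ =>
      ((k : ℝ) + 1) ^ 2 /
        ((Real.pi ^ 2 * ((k : ℝ) + 1) ^ 2 - t ^ 2) *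
          (Real.pi ^ 2 * ((k : ℝ) + 1) ^ 2 - s ^ 2 * t ^ 2))) ∧
    s * Real.cot (s * t) - Real.cot t =
      2 * Real.pi ^ 2 * t * (1 - s ^ 2) *
        ∑' k : ℕ,
          ((k : ℝ) + 1) ^ 2 /
            ((Real.pi ^ 2 * ((k : ℝ) + 1) ^ 2 - t ^ 2) *
              (Real.pi ^ 2 * ((k : ℝ) + 1) ^ 2 - s ^ 2 * t ^ 2)) := by
  obtain ⟨hs0, hs1⟩ := hs
  obtain ⟨ht0, htπ⟩ := ht
  have hst : s * t ∈ Set.Ioo (0 : ℝ) Real.pi :=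
    ⟨mul_pos hs0 ht0, lt_trans (by nlinarith) htπ⟩
  have hA := cot_hasSum_aux t ⟨ht0, htπ⟩
  have hB := cot_hasSum_aux (s * t) hst
  set f : ℕ → ℝ := fun k =>
    ((k : ℝ) + 1) ^ 2 /
      ((Real.pi ^ 2 * ((k : ℝ) + 1) ^ 2 - t ^ 2) *
        (Real.pi ^ 2 * ((k : ℝ) + 1) ^ 2 - s ^ 2 * t ^ 2)) with hf
  set C : ℝ := 2 * Real.pi ^ 2 * t * (1 - s ^ 2) with hCdef
  have hC0 : C ≠ 0 := by
    have : 0 < 1 - s ^ 2 := by nlinarith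
    have hπ := Real.pi_pos
    positivity
  -- combine the two series
  have hcomb := (hB.mul_left s).sub hA
  -- identify the termwise values
  have hterm : ∀ k : ℕ,
      s * (2 * (s * t) / ((s * t) ^ 2 - Real.pi ^ 2 * ((k : ℝ) + 1) ^ 2))
        - 2 * t / (t ^ 2 - Real.pi ^ 2 * ((k : ℝ) + 1) ^ 2) = C * f k := by
    intro k
    have hk1 : (1 : ℝ) ≤ ((k : ℝ) + 1) := by
      have : (0 : ℝ) ≤ (k : ℝ) := Nat.cast_nonneg k
      linarith
    have hπk : Real.pi ≤ Real.pi * ((k : ℝ) + 1) :=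
      le_mul_of_one_le_right Real.pi_pos.le hk1
    have h1 : 0 < Real.pi ^ 2 * ((k : ℝ) + 1) ^ 2 - t ^ 2 := by nlinarith
    have hst2 : s ^ 2 * t ^ 2 < t ^ 2 := by
      have hs2 : s ^ 2 < 1 := by nlinarith
      have ht2 : (0 : ℝ) < t ^ 2 := by positivity
      nlinarith [mul_pos (sub_pos.mpr hs2) ht2]
    have h2 : 0 < Real.pi ^ 2 * ((k : ℝ) + 1) ^ 2 - s ^ 2 * t ^ 2 := by nlinarith
    have h3 : (s * t) ^ 2 - Real.pi ^ 2 * ((k : ℝ) + 1) ^ 2 ≠ 0 :=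
      sub_ne_zero.mpr (ne_of_lt (by nlinarith))
    have h4 : t ^ 2 - Real.pi ^ 2 * ((k : ℝ) + 1) ^ 2 ≠ 0 :=
      sub_ne_zero.mpr (ne_of_lt (by nlinarith))
    simp only [hf, hCdef]
    rw [mul_pow] at h3 ⊢
    have h1' := h1.ne'
    have h2' := h2.ne'
    field_simp
    ring
  have hval : s * (Real.cot (s * t) - 1 / (s * t)) - (Real.cot t - 1 / t)
      = s * Real.cot (s * t) - Real.cot t := by
    have : s * (1 / (s * t)) = 1 / t := by
      field_simp
    field_simp
    ring
  rw [hval] at hcomb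
  have hcomb2 : HasSum (fun k => C * f k) (s * Real.cot (s * t) - Real.cot t) := by
    simpa only [hterm] using hcomb
  have hf2 := hcomb2.mul_left C⁻¹
  simp only [← mul_assoc, inv_mul_cancel₀ hC0, one_mul] at hf2
  refine ⟨hf2.summable, ?_⟩
  rw [hf2.tsum_eq, ← mul_assoc, mul_inv_cancel₀ hC0, one_mul]
end

section
/- For every s ∈ (0,1) and every t ∈ (0,π), one has cot(t) < s·cot(s·t). -/
lemma hasDerivAt_mul_cot {x : ℝ} (hx : Real.sin x ≠ 0) :
    HasDerivAt (fun y => y * Real.cot y) (Real.cot x - x / Real.sin x ^ 2) x := by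
  have hcot : HasDerivAt Real.cot (-(1 / Real.sin x ^ 2)) x := by
    have h := (Real.hasDerivAt_cos x).div (Real.hasDerivAt_sin x) hx
    have heq : Real.cot = fun y => Real.cos y / Real.sin y := by
      funext y; exact Real.cot_eq_cos_div_sin y
    rw [heq]
    refine h.congr_deriv ?_
    have h1 : Real.sin x ^ 2 + Real.cos x ^ 2 = 1 := by
      rw [add_comm]; exact Real.cos_sq_add_sin_sq x
    field_simp
    nlinarith [Real.sin_sq_add_cos_sq x]
  have := (hasDerivAt_id' x).mul hcot
  refine this.congr_deriv ?_
  rw [Real.cot_eq_cos_div_sin]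
  field_simp
  ring

lemma strictAntiOn_mul_cot : StrictAntiOn (fun y => y * Real.cot y) (Set.Ioo 0 Real.pi) := by
  have : ∀ x ∈ Set.Ioo (0:ℝ) Real.pi, Real.sin x ≠ 0 := fun x hx =>
    ne_of_gt (Real.sin_pos_of_pos_of_lt_pi hx.1 hx.2)
  apply strictAntiOn_of_deriv_neg (convex_Ioo 0 Real.pi)
  · intro x hx
    exact ((hasDerivAt_mul_cot (this x hx)).continuousAt).continuousWithinAt
  · intro x hx
    rw [interior_Ioo] at hx
    have hsin : Real.sin x ≠ 0 := this x hx
    rw [(hasDerivAt_mul_cot hsin).deriv]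
    have hs2 : 0 < Real.sin x ^ 2 := by positivity
    have hsp : 0 < Real.sin x := Real.sin_pos_of_pos_of_lt_pi hx.1 hx.2
    rw [Real.cot_eq_cos_div_sin]
    rw [div_sub_div _ _ hsin (ne_of_gt hs2)]
    apply div_neg_of_neg_of_pos
    · have : Real.sin x * Real.cos x < x := by
        have h1 : Real.sin x * Real.cos x ≤ Real.sin x := by
          nlinarith [Real.cos_le_one x]
        have h2 : Real.sin x < x := Real.sin_lt hx.1
        linarith
      nlinarith [mul_lt_mul_of_pos_left this hsp]
    · positivity

/-- For every `s ∈ (0,1)` and every `t ∈ (0,π)`, one has `cot t < s · cot(s t)`. -/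
theorem cot_lt_smul_cot (s t : ℝ) (hs : s ∈ Set.Ioo (0 : ℝ) 1) (ht : t ∈ Set.Ioo 0 Real.pi) :
    Real.cot t < s * Real.cot (s * t) := by
  have hst : s * t ∈ Set.Ioo (0:ℝ) Real.pi := by
    constructor
    · exact mul_pos hs.1 ht.1
    · calc s * t < 1 * t := mul_lt_mul_of_pos_right hs.2 ht.1
        _ = t := one_mul t
        _ < Real.pi := ht.2
  have hlt : s * t < t := by nlinarith [ht.1, hs.2]
  have := strictAntiOn_mul_cot hst ht hlt
  simp only at this
  -- this : t * cot t < (s*t) * cot (s*t)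
  have ht0 : (0:ℝ) < t := ht.1
  rw [mul_assoc] at this
  have h2 : t * Real.cot t < t * (s * Real.cot (s * t)) := by
    rw [show t * (s * Real.cot (s * t)) = s * (t * Real.cot (s * t)) by ring]
    exact this
  exact lt_of_mul_lt_mul_left h2 ht0.le
end

section
/- For every s ∈ (0,1) and every t ∈ (0,π), one has the identity s²·(1 − t·cot(t)) − (1 − s·t·cot(s·t)) = 2·t⁴·s²·(1−s²)·Σ_{k=1}^∞ 1/((π²k² − t²)·(π²k² − s²t²)), and in particular this quantity is strictly positive. -/
open Real Filter Set

lemma aux_summable_inv_sq : Summable (fun k : ℕ => 1 / ((k : ℝ) + 1) ^ 2) := by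
  have := Real.summable_one_div_nat_pow.mpr (by norm_num : 1 < 2)
  have h2 := (summable_nat_add_iff 1).mpr this
  refine h2.congr fun n => ?_
  push_cast
  ring

lemma aux_pos (t : ℝ) (ht : t ∈ Set.Ioo 0 Real.pi) (k : ℕ) :
    0 < Real.pi ^ 2 * ((k : ℝ) + 1) ^ 2 - t ^ 2 := by
  have hk1 : (1 : ℝ) ≤ ((k : ℝ) + 1) ^ 2 := by nlinarith [Nat.cast_nonneg (α := ℝ) k]
  have hπ := Real.pi_pos
  nlinarith [ht.1, ht.2]

lemma aux_summable_log (x : ℝ) (hx : x ∈ Set.Ioo 0 Real.pi) :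
    Summable (fun k : ℕ => Real.log (1 - x ^ 2 / (Real.pi ^ 2 * ((k : ℝ) + 1) ^ 2))) := by
  have hπ := Real.pi_pos
  apply Summable.of_norm_bounded
    (g := fun k : ℕ => (x ^ 2 / (Real.pi ^ 2 - x ^ 2)) * (1 / ((k : ℝ) + 1) ^ 2))
    (aux_summable_inv_sq.mul_left _)
  intro k
  have hk1 : (1 : ℝ) ≤ ((k : ℝ) + 1) ^ 2 := by nlinarith [Nat.cast_nonneg (α := ℝ) k]
  have hA : 0 < Real.pi ^ 2 * ((k : ℝ) + 1) ^ 2 - x ^ 2 := aux_pos x hx k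
  have hc : (0:ℝ) < Real.pi ^ 2 * ((k : ℝ) + 1) ^ 2 := by positivity
  set w : ℝ := 1 - x ^ 2 / (Real.pi ^ 2 * ((k : ℝ) + 1) ^ 2) with hw
  have hwpos : 0 < w := by
    rw [hw, sub_pos, div_lt_one hc]; linarith
  have hwle : w ≤ 1 := by
    have : 0 ≤ x ^ 2 / (Real.pi ^ 2 * ((k : ℝ) + 1) ^ 2) := by positivity
    rw [hw]; linarith
  have hlogle : Real.log w ≤ 0 := Real.log_nonpos hwpos.le hwle
  rw [Real.norm_eq_abs, abs_of_nonpos hlogle, ← Real.log_inv]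
  have hstep : Real.log w⁻¹ ≤ w⁻¹ - 1 := Real.log_le_sub_one_of_pos (by positivity)
  refine hstep.trans ?_
  have hval : w⁻¹ - 1 = x ^ 2 / (Real.pi ^ 2 * ((k : ℝ) + 1) ^ 2 - x ^ 2) := by
    rw [hw]; field_simp; ring
  rw [hval]
  have hx2 : x ^ 2 < Real.pi ^ 2 := by nlinarith [hx.1, hx.2]
  have hge : (Real.pi ^ 2 - x ^ 2) * ((k : ℝ) + 1) ^ 2 ≤
      Real.pi ^ 2 * ((k : ℝ) + 1) ^ 2 - x ^ 2 := by nlinarith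
  calc x ^ 2 / (Real.pi ^ 2 * ((k : ℝ) + 1) ^ 2 - x ^ 2)
      ≤ x ^ 2 / ((Real.pi ^ 2 - x ^ 2) * ((k : ℝ) + 1) ^ 2) := by
        apply div_le_div_of_nonneg_left (sq_nonneg x) _ hge
        have : (0:ℝ) < Real.pi ^ 2 - x ^ 2 := by linarith
        positivity
    _ = x ^ 2 / (Real.pi ^ 2 - x ^ 2) * (1 / ((k : ℝ) + 1) ^ 2) := by
        rw [div_mul_div_comm, mul_one]

lemma aux_fac_pos (x : ℝ) (hx : x ∈ Set.Ioo 0 Real.pi) (k : ℕ) :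
    0 < 1 - x ^ 2 / (Real.pi ^ 2 * ((k : ℝ) + 1) ^ 2) := by
  have hπ := Real.pi_pos
  have hc : (0:ℝ) < Real.pi ^ 2 * ((k : ℝ) + 1) ^ 2 := by positivity
  rw [sub_pos, div_lt_one hc]
  have := aux_pos x hx k
  linarith

lemma aux_hasSum_log (x : ℝ) (hx : x ∈ Set.Ioo 0 Real.pi) :
    HasSum (fun k : ℕ => Real.log (1 - x ^ 2 / (Real.pi ^ 2 * ((k : ℝ) + 1) ^ 2)))
      (Real.log (Real.sin x) - Real.log x) := by
  have hπ := Real.pi_pos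
  have hx0 : (0:ℝ) < x := hx.1
  have hsin : 0 < Real.sin x := Real.sin_pos_of_pos_of_lt_pi hx.1 hx.2
  have hsum := aux_summable_log x hx
  rw [hsum.hasSum_iff_tendsto_nat]
  have hE := Real.tendsto_euler_sin_prod (x / Real.pi)
  have hE' : Filter.Tendsto
      (fun n : ℕ => x * ∏ j ∈ Finset.range n, (1 - x ^ 2 / (Real.pi ^ 2 * ((j : ℝ) + 1) ^ 2)))
      Filter.atTop (nhds (Real.sin x)) := by
    have hs : Real.sin (Real.pi * (x / Real.pi)) = Real.sin x := by
      rw [mul_div_cancel₀ _ (ne_of_gt hπ)]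
    rw [hs] at hE
    refine hE.congr fun n => ?_
    rw [mul_div_cancel₀ _ (ne_of_gt hπ)]
    congr 1
    refine Finset.prod_congr rfl fun j _ => ?_
    congr 1
    rw [div_pow, div_div]
  have hlog := ((Real.continuousAt_log hsin.ne').tendsto.comp hE')
  have heq : ∀ n : ℕ,
      Real.log (x * ∏ j ∈ Finset.range n, (1 - x ^ 2 / (Real.pi ^ 2 * ((j : ℝ) + 1) ^ 2))) =
        Real.log x +
          ∑ j ∈ Finset.range n, Real.log (1 - x ^ 2 / (Real.pi ^ 2 * ((j : ℝ) + 1) ^ 2)) := by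
    intro n
    rw [Real.log_mul hx0.ne' (Finset.prod_ne_zero_iff.mpr fun j _ => (aux_fac_pos x hx j).ne'),
      Real.log_prod fun j _ => (aux_fac_pos x hx j).ne']
  have h2 : Filter.Tendsto
      (fun n : ℕ => Real.log x +
        ∑ j ∈ Finset.range n, Real.log (1 - x ^ 2 / (Real.pi ^ 2 * ((j : ℝ) + 1) ^ 2)))
      Filter.atTop (nhds (Real.log (Real.sin x))) := by
    refine hlog.congr fun n => ?_
    exact heq n
  have h3 := h2.sub_const (Real.log x)
  refine h3.congr fun n => ?_
  ring

lemma aux_cot_hasSum (t : ℝ) (ht : t ∈ Set.Ioo 0 Real.pi) :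
    HasSum (fun k : ℕ => 2 * t ^ 2 / (Real.pi ^ 2 * ((k : ℝ) + 1) ^ 2 - t ^ 2))
      (1 - t * Real.cot t) := by
  have hπ := Real.pi_pos
  have ht0 : (0:ℝ) < t := ht.1
  set b : ℝ := (t + Real.pi) / 2 with hb
  have htb : t < b := by rw [hb]; linarith [ht.2]
  have hbπ : b < Real.pi := by rw [hb]; linarith [ht.1]
  have hb0 : 0 < b := by rw [hb]; linarith
  set g : ℕ → ℝ → ℝ := fun k x => Real.log (1 - x ^ 2 / (Real.pi ^ 2 * ((k : ℝ) + 1) ^ 2))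
    with hgdef
  set g' : ℕ → ℝ → ℝ := fun k x => -(2 * x) / (Real.pi ^ 2 * ((k : ℝ) + 1) ^ 2 - x ^ 2)
    with hg'def
  set u : ℕ → ℝ := fun k => 2 * b / ((Real.pi ^ 2 - b ^ 2) * ((k : ℝ) + 1) ^ 2) with hu
  have hbsq : b ^ 2 < Real.pi ^ 2 := by nlinarith
  have hu_sum : Summable u := by
    have := aux_summable_inv_sq.mul_left (2 * b / (Real.pi ^ 2 - b ^ 2))
    refine this.congr fun k => ?_
    rw [hu]
    field_simp
  -- facts on the interval
  have hsq_lt : ∀ x : ℝ, x ∈ Set.Ioo (-b) b → x ^ 2 < b ^ 2 := by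
    intro x hxI
    have := abs_lt.mpr ⟨hxI.1, hxI.2⟩
    nlinarith [abs_nonneg x, le_abs_self x, neg_abs_le x, sq_abs x]
  have hc_pos : ∀ k : ℕ, (0:ℝ) < Real.pi ^ 2 * ((k : ℝ) + 1) ^ 2 := by
    intro k; positivity
  have hk1 : ∀ k : ℕ, (1:ℝ) ≤ ((k : ℝ) + 1) ^ 2 := by
    intro k; nlinarith [Nat.cast_nonneg (α := ℝ) k]
  have hA_pos : ∀ k : ℕ, ∀ x : ℝ, x ∈ Set.Ioo (-b) b →
      0 < Real.pi ^ 2 * ((k : ℝ) + 1) ^ 2 - x ^ 2 := by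
    intro k x hxI
    have h1 := hsq_lt x hxI
    have h2 := hk1 k
    nlinarith
  have hderiv : ∀ (k : ℕ) (x : ℝ), x ∈ Set.Ioo (-b) b → HasDerivAt (g k) (g' k x) x := by
    intro k x hxI
    have hc := hc_pos k
    have hfac : 1 - x ^ 2 / (Real.pi ^ 2 * ((k : ℝ) + 1) ^ 2) ≠ 0 := by
      have hA := hA_pos k x hxI
      have : 0 < 1 - x ^ 2 / (Real.pi ^ 2 * ((k : ℝ) + 1) ^ 2) := by
        rw [sub_pos, div_lt_one hc]; linarith
      exact this.ne'
    have hinner : HasDerivAt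
        (fun y : ℝ => 1 - y ^ 2 / (Real.pi ^ 2 * ((k : ℝ) + 1) ^ 2))
        (-(2 * x ^ 1 / (Real.pi ^ 2 * ((k : ℝ) + 1) ^ 2))) x := by
      have := ((hasDerivAt_pow 2 x).div_const (Real.pi ^ 2 * ((k : ℝ) + 1) ^ 2)).const_sub 1
      simpa using this
    have hd := hinner.log hfac
    convert hd using 1
    simp only [hg'def, pow_one]
    have hA := hA_pos k x hxI
    rw [div_eq_div_iff hA.ne' hfac]
    field_simp
  have hbound : ∀ (k : ℕ) (x : ℝ), x ∈ Set.Ioo (-b) b → ‖g' k x‖ ≤ u k := by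
    intro k x hxI
    have hA := hA_pos k x hxI
    rw [hg'def, hu]
    simp only [Real.norm_eq_abs, abs_div, abs_of_pos hA]
    have h1 : |(-(2 * x))| ≤ 2 * b := by
      rw [abs_neg, abs_mul]
      have := abs_lt.mpr ⟨hxI.1, hxI.2⟩
      simp only [Nat.abs_ofNat]
      nlinarith [abs_nonneg x]
    have h2 : (Real.pi ^ 2 - b ^ 2) * ((k : ℝ) + 1) ^ 2 ≤
        Real.pi ^ 2 * ((k : ℝ) + 1) ^ 2 - x ^ 2 := by
      have := hsq_lt x hxI
      have := hk1 k
      nlinarith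
    have hden : (0:ℝ) < (Real.pi ^ 2 - b ^ 2) * ((k : ℝ) + 1) ^ 2 := by
      have := hk1 k
      nlinarith
    exact div_le_div₀ (by positivity) h1 hden h2
  -- summability of g at t and of g'
  have htI : t ∈ Set.Ioo (-b) b := ⟨by linarith, htb⟩
  have hg0 : Summable (fun k => g k t) := aux_summable_log t ht
  have hg'sum : Summable (fun k => g' k t) :=
    Summable.of_norm_bounded hu_sum fun k => hbound k t htI
  have hkey := hasDerivAt_tsum_of_isPreconnected hu_sum isOpen_Ioo
    (convex_Ioo (-b) b).isPreconnected hderiv hbound htI hg0 htI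
  -- identify the tsum with log (sin x) - log x near t
  have hEq : (fun z => ∑' k, g k z) =ᶠ[nhds t] (fun z => Real.log (Real.sin z) - Real.log z) := by
    filter_upwards [isOpen_Ioo.mem_nhds ht] with z hz
    exact (aux_hasSum_log z hz).tsum_eq
  have hF : HasDerivAt (fun z => Real.log (Real.sin z) - Real.log z)
      (Real.cot t - 1 / t) t := by
    have h1 : HasDerivAt (fun z => Real.log (Real.sin z)) (Real.cos t / Real.sin t) t :=
      (Real.hasDerivAt_sin t).log (Real.sin_pos_of_pos_of_lt_pi ht.1 ht.2).ne'
    have h2 : HasDerivAt Real.log t⁻¹ t := Real.hasDerivAt_log ht0.ne'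
    have := h1.sub h2
    rw [Real.cot_eq_cos_div_sin]
    rw [one_div]; exact this
  have hderivS : HasDerivAt (fun z => ∑' k, g k z) (Real.cot t - 1 / t) t :=
    hEq.hasDerivAt_iff.mpr hF
  have huniq : ∑' k, g' k t = Real.cot t - 1 / t := hkey.unique hderivS
  -- conclude
  have hhs : HasSum (fun k => g' k t) (Real.cot t - 1 / t) := huniq ▸ hg'sum.hasSum
  have hfinal := hhs.mul_left (-t)
  have h1 : (-t) * (Real.cot t - 1 / t) = 1 - t * Real.cot t := by
    field_simp
    ring
  rw [h1] at hfinal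
  refine hfinal.congr_fun fun k => ?_
  rw [hg'def]
  have hA := aux_pos t ht k
  field_simp

/-- For every `s ∈ (0,1)` and `t ∈ (0,π)`:
`s²(1 − t cot t) − (1 − s t cot(s t)) = 2 t⁴ s² (1−s²) Σ_{k≥1} 1/((π²k² − t²)(π²k² − s²t²))`,
the series converges, and in particular this quantity is strictly positive. -/
theorem sq_one_sub_cot_diff_series (s t : ℝ) (hs : s ∈ Set.Ioo (0 : ℝ) 1)
    (ht : t ∈ Set.Ioo 0 Real.pi) :
    Summable (fun k : ℕ =>
      1 /
        ((Real.pi ^ 2 * ((k : ℝ) + 1) ^ 2 - t ^ 2) *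
          (Real.pi ^ 2 * ((k : ℝ) + 1) ^ 2 - s ^ 2 * t ^ 2))) ∧
    s ^ 2 * (1 - t * Real.cot t) - (1 - s * t * Real.cot (s * t)) =
      2 * t ^ 4 * s ^ 2 * (1 - s ^ 2) *
        ∑' k : ℕ,
          1 /
            ((Real.pi ^ 2 * ((k : ℝ) + 1) ^ 2 - t ^ 2) *
              (Real.pi ^ 2 * ((k : ℝ) + 1) ^ 2 - s ^ 2 * t ^ 2)) ∧
    0 < s ^ 2 * (1 - t * Real.cot t) - (1 - s * t * Real.cot (s * t)) := by
  obtain ⟨hs0, hs1⟩ := hs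
  obtain ⟨ht0, htπ⟩ := ht
  have hst : s * t ∈ Set.Ioo 0 Real.pi := by
    constructor
    · positivity
    · calc s * t < 1 * t := by apply mul_lt_mul_of_pos_right hs1 ht0
        _ = t := one_mul t
        _ < Real.pi := htπ
  have h1 := aux_cot_hasSum t ⟨ht0, htπ⟩
  have h2 := aux_cot_hasSum (s * t) hst
  set f : ℕ → ℝ := fun k =>
    1 / ((Real.pi ^ 2 * ((k : ℝ) + 1) ^ 2 - t ^ 2) *
      (Real.pi ^ 2 * ((k : ℝ) + 1) ^ 2 - s ^ 2 * t ^ 2)) with hf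
  set C : ℝ := 2 * t ^ 4 * s ^ 2 * (1 - s ^ 2) with hC
  have hCpos : 0 < C := by
    rw [hC]
    have : 0 < 1 - s ^ 2 := by nlinarith
    positivity
  have hApos : ∀ k : ℕ, 0 < Real.pi ^ 2 * ((k : ℝ) + 1) ^ 2 - t ^ 2 :=
    fun k => aux_pos t ⟨ht0, htπ⟩ k
  have hBpos : ∀ k : ℕ, 0 < Real.pi ^ 2 * ((k : ℝ) + 1) ^ 2 - s ^ 2 * t ^ 2 := by
    intro k
    have := aux_pos (s * t) hst k
    have hsq : (s * t) ^ 2 = s ^ 2 * t ^ 2 := by ring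
    rwa [hsq] at this
  have h3 := (h1.mul_left (s ^ 2)).sub h2
  have h4 : HasSum (fun k : ℕ => C * f k)
      (s ^ 2 * (1 - t * Real.cot t) - (1 - s * t * Real.cot (s * t))) := by
    refine h3.congr_fun fun k => ?_
    have hA := (hApos k).ne'
    have hB := (hBpos k).ne'
    rw [hf, hC, mul_pow s t 2]
    have hB' : Real.pi ^ 2 * ((k : ℝ) + 1) ^ 2 - t ^ 2 * s ^ 2 ≠ 0 := by rw [mul_comm (t ^ 2)]; exact hB
    field_simp
    ring
  have hsumf : Summable f := by
    have := h4.summable.mul_left C⁻¹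
    refine this.congr fun k => ?_
    rw [inv_mul_cancel_left₀ hCpos.ne']
  have hfpos : ∀ k : ℕ, 0 < f k := by
    intro k
    rw [hf]
    exact div_pos one_pos (mul_pos (hApos k) (hBpos k))
  have htsum : s ^ 2 * (1 - t * Real.cot t) - (1 - s * t * Real.cot (s * t)) = C * ∑' k, f k := by
    rw [← tsum_mul_left, h4.tsum_eq]
  refine ⟨hsumf, htsum, ?_⟩
  rw [htsum]
  exact mul_pos hCpos (Summable.tsum_pos hsumf (fun k => (hfpos k).le) 0 (hfpos 0))
end

section
/- For every integer n ≥ 1, every s ∈ (0,1) and every θ ∈ [0,2π), the Heisenberg distortion coefficient satisfies τ_s^n(θ) ≥ s^{(2n+3)/(2n+1)} = τ_s^n(0). -/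
open Real Set

lemma f_hasDeriv (t : ℝ) :
    HasDerivAt (fun t => Real.sin t - t * Real.cos t) (t * Real.sin t) t := by
  have h1 := Real.hasDerivAt_sin t
  have h2 := (hasDerivAt_id t).mul (Real.hasDerivAt_cos t)
  refine (h1.sub h2).congr_deriv ?_
  simp only [id]; ring

lemma f_nonneg : ∀ t ∈ Icc (0:ℝ) π, 0 ≤ Real.sin t - t * Real.cos t := by
  intro t ht
  have hmono : MonotoneOn (fun t => Real.sin t - t * Real.cos t) (Icc 0 π) := by
    apply monotoneOn_of_deriv_nonneg (convex_Icc _ _)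
    · exact (Real.continuous_sin.sub (continuous_id.mul Real.continuous_cos)).continuousOn
    · intro x hx; exact (f_hasDeriv x).differentiableAt.differentiableWithinAt
    · intro x hx
      rw [(f_hasDeriv x).deriv]
      rw [interior_Icc] at hx
      exact mul_nonneg hx.1.le (Real.sin_nonneg_of_nonneg_of_le_pi hx.1.le hx.2.le)
  have := hmono (left_mem_Icc.2 Real.pi_nonneg) ht ht.1
  simpa using this

lemma f_pos : ∀ t ∈ Ioo (0:ℝ) π, 0 < Real.sin t - t * Real.cos t := by
  intro t ht
  have hmono : StrictMonoOn (fun t => Real.sin t - t * Real.cos t) (Icc 0 π) := by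
    apply strictMonoOn_of_deriv_pos (convex_Icc _ _)
    · exact (Real.continuous_sin.sub (continuous_id.mul Real.continuous_cos)).continuousOn
    · intro x hx
      rw [(f_hasDeriv x).deriv, interior_Icc] at *
      exact mul_pos hx.1 (Real.sin_pos_of_pos_of_lt_pi hx.1 hx.2)
  have := hmono (left_mem_Icc.2 Real.pi_nonneg) ⟨ht.1.le, ht.2.le⟩ ht.1
  simpa using this

lemma h_hasDeriv (t : ℝ) :
    HasDerivAt (fun t => t^2 * Real.sin t + 3 * (t * Real.cos t) - 3 * Real.sin t)
      (-t * (Real.sin t - t * Real.cos t)) t := by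
  have h1 := ((hasDerivAt_pow 2 t).mul (Real.hasDerivAt_sin t)).add
    (((hasDerivAt_id t).mul (Real.hasDerivAt_cos t)).const_mul 3)
  have := h1.sub ((Real.hasDerivAt_sin t).const_mul 3)
  refine this.congr_deriv ?_
  simp only [id]; norm_num; ring

lemma h_nonpos : ∀ t ∈ Icc (0:ℝ) π,
    t^2 * Real.sin t + 3 * (t * Real.cos t) - 3 * Real.sin t ≤ 0 := by
  intro t ht
  have hmono : AntitoneOn (fun t => t^2 * Real.sin t + 3 * (t * Real.cos t) - 3 * Real.sin t)
      (Icc 0 π) := by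
    apply antitoneOn_of_deriv_nonpos (convex_Icc _ _)
    · fun_prop
    · intro x hx; exact (h_hasDeriv x).differentiableAt.differentiableWithinAt
    · intro x hx
      rw [(h_hasDeriv x).deriv, interior_Icc] at *
      have := f_nonneg x ⟨hx.1.le, hx.2.le⟩
      nlinarith [hx.1]
  have := hmono (left_mem_Icc.2 Real.pi_nonneg) ht ht.1
  simpa using this

lemma H_anti : AntitoneOn (fun t => (Real.sin t - t * Real.cos t) / t^3) (Ioc (0:ℝ) π) := by
  apply antitoneOn_of_deriv_nonpos (convex_Ioc _ _)
  · apply ContinuousOn.div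
    · fun_prop
    · fun_prop
    · intro x hx
      have hx0 : 0 < x := hx.1
      positivity
  · intro x hx
    rw [interior_Ioc] at hx
    have hx0 : 0 < x := hx.1
    exact (((f_hasDeriv x).div (hasDerivAt_pow 3 x) (by positivity)).differentiableAt).differentiableWithinAt
  · intro x hx
    rw [interior_Ioc] at hx
    have hx0 : 0 < x := hx.1
    have hx3 : (x:ℝ)^3 ≠ 0 := by positivity
    rw [(show HasDerivAt (fun t => (Real.sin t - t * Real.cos t) / t^3) _ x from (f_hasDeriv x).div (hasDerivAt_pow 3 x) hx3).deriv]
    have hh := h_nonpos x ⟨hx.1.le, hx.2.le⟩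
    have hx6 : (0:ℝ) < (x^3)^2 := by positivity
    apply div_nonpos_of_nonpos_of_nonneg _ hx6.le
    push_cast
    norm_num
    nlinarith [mul_nonneg (sq_nonneg x) (neg_nonneg.2 hh)]

lemma sin_smul_ge {s x : ℝ} (hs : s ∈ Ioo (0:ℝ) 1) (hx : x ∈ Ioo (0:ℝ) π) :
    s * Real.sin x ≤ Real.sin (s * x) := by
  have hanti : AntitoneOn (fun t => Real.sin t / t) (Ioc (0:ℝ) π) := by
    apply antitoneOn_of_deriv_nonpos (convex_Ioc _ _)
    · apply ContinuousOn.div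
      · fun_prop
      · fun_prop
      · intro t ht; exact ne_of_gt ht.1
    · intro t ht
      rw [interior_Ioc] at ht
      exact (((Real.hasDerivAt_sin t).div (hasDerivAt_id' t) (ne_of_gt ht.1)).differentiableAt).differentiableWithinAt
    · intro t ht
      rw [interior_Ioc] at ht
      rw [(show HasDerivAt (fun t => Real.sin t / t) _ t from (Real.hasDerivAt_sin t).div (hasDerivAt_id' t) (ne_of_gt ht.1)).deriv]
      apply div_nonpos_of_nonpos_of_nonneg _ (sq_nonneg _)
      have := f_nonneg t ⟨ht.1.le, ht.2.le⟩
      nlinarith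
  have hsx : s * x ∈ Ioc (0:ℝ) π := ⟨mul_pos hs.1 hx.1, le_trans (by nlinarith [hx.1, hs.2.le] : s * x ≤ x) hx.2.le⟩
  have hle := hanti hsx ⟨hx.1, hx.2.le⟩ (by nlinarith [hx.1, hs.2.le])
  -- sin x / x ≤ sin (s*x) / (s*x)
  have hx0 : 0 < x := hx.1
  have hsx0 : 0 < s * x := hsx.1
  rw [div_le_div_iff₀ hx0 hsx0] at hle
  nlinarith [hle]

lemma cube_smul_ge {s x : ℝ} (hs : s ∈ Ioo (0:ℝ) 1) (hx : x ∈ Ioo (0:ℝ) π) :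
    s^3 * (Real.sin x - x * Real.cos x) ≤ Real.sin (s * x) - (s * x) * Real.cos (s * x) := by
  have hsx : s * x ∈ Ioc (0:ℝ) π := ⟨mul_pos hs.1 hx.1, le_trans (by nlinarith [hx.1, hs.2.le] : s * x ≤ x) hx.2.le⟩
  have hle := H_anti hsx ⟨hx.1, hx.2.le⟩ (by nlinarith [hx.1, hs.2.le])
  have hx0 : 0 < x := hx.1
  have hsx0 : 0 < s * x := hsx.1
  have h3 : (0:ℝ) < x^3 := by positivity
  have h3' : (0:ℝ) < (s*x)^3 := by positivity
  rw [div_le_div_iff₀ (by positivity) (by positivity)] at hle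
  nlinarith [hle]


/-- For every integer `n ≥ 1`, `s ∈ (0,1)` and `θ ∈ [0, 2π)`, one has
`τ_s^n(θ) ≥ s^{(2n+3)/(2n+1)} = τ_s^n(0)`. -/
theorem heisenbergTau_ge (n : ℕ) (hn : 1 ≤ n) (s : ℝ) (hs : s ∈ Set.Ioo (0 : ℝ) 1)
    (θ : ℝ) (hθ₀ : 0 ≤ θ) (hθ : θ < 2 * Real.pi) :
    s ^ ((2 * (n : ℝ) + 3) / (2 * (n : ℝ) + 1)) ≤ heisenbergTau n s θ ∧
      heisenbergTau n s 0 = s ^ ((2 * (n : ℝ) + 3) / (2 * (n : ℝ) + 1)) := by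
  have h0 : heisenbergTau n s 0 = s ^ ((2 * (n : ℝ) + 3) / (2 * (n : ℝ) + 1)) := by
    simp [heisenbergTau]
  refine ⟨?_, h0⟩
  rcases eq_or_lt_of_le hθ₀ with rfl | hθpos
  · rw [← h0]
  rw [heisenbergTau, if_neg (ne_of_gt hθpos)]
  set x := θ / 2 with hxdef
  have hx : x ∈ Ioo (0:ℝ) π := ⟨by positivity, by rw [hxdef]; linarith⟩
  have hθs : θ * s / 2 = s * x := by rw [hxdef]; ring
  rw [hθs]
  have hs0 : (0:ℝ) < s := hs.1
  have hsinx : 0 < Real.sin x := Real.sin_pos_of_pos_of_lt_pi hx.1 hx.2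
  have hfx : 0 < Real.sin x - x * Real.cos x := f_pos x hx
  have hA : s ≤ Real.sin (s * x) / Real.sin x := by
    rw [le_div_iff₀ hsinx]
    exact sin_smul_ge hs hx
  have hB : s ^ 3 ≤ (Real.sin (s * x) - s * x * Real.cos (s * x)) /
      (Real.sin x - x * Real.cos x) := by
    rw [le_div_iff₀ hfx]
    exact cube_smul_ge hs hx
  have hd : (0:ℝ) < 2 * (n : ℝ) + 1 := by positivity
  have he : (0:ℝ) ≤ (2 * (n : ℝ) - 1) / (2 * (n : ℝ) + 1) := by
    apply div_nonneg _ hd.le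
    have : (1:ℝ) ≤ (n:ℝ) := by exact_mod_cast hn
    linarith
  have he1 : (0:ℝ) ≤ (1:ℝ) / (2 * (n : ℝ) + 1) := by positivity
  have hsplit : s ^ ((2 * (n : ℝ) + 3) / (2 * (n : ℝ) + 1)) =
      s ^ ((1:ℝ) / (2 * (n : ℝ) + 1)) * s ^ ((2 * (n : ℝ) - 1) / (2 * (n : ℝ) + 1)) *
        (s ^ 3) ^ ((1:ℝ) / (2 * (n : ℝ) + 1)) := by
    rw [← Real.rpow_natCast s 3, ← Real.rpow_mul hs0.le,
      ← Real.rpow_add hs0, ← Real.rpow_add hs0]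
    congr 1
    field_simp
    push_cast; ring
  rw [hsplit]
  have g1 : s ^ ((2 * (n : ℝ) - 1) / (2 * (n : ℝ) + 1)) ≤
      (Real.sin (s * x) / Real.sin x) ^ ((2 * (n : ℝ) - 1) / (2 * (n : ℝ) + 1)) :=
    Real.rpow_le_rpow hs0.le hA he
  have g2 : (s ^ 3) ^ ((1:ℝ) / (2 * (n : ℝ) + 1)) ≤
      ((Real.sin (s * x) - s * x * Real.cos (s * x)) /
        (Real.sin x - x * Real.cos x)) ^ ((1:ℝ) / (2 * (n : ℝ) + 1)) :=
    Real.rpow_le_rpow (by positivity) hB he1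
  have hp1 : (0:ℝ) ≤ s ^ ((1:ℝ) / (2 * (n : ℝ) + 1)) := by positivity
  have hp2 : (0:ℝ) ≤ s ^ ((2 * (n : ℝ) - 1) / (2 * (n : ℝ) + 1)) := Real.rpow_nonneg hs0.le _
  have hp3 : (0:ℝ) ≤ (s ^ 3) ^ ((1:ℝ) / (2 * (n : ℝ) + 1)) := by positivity
  exact mul_le_mul (mul_le_mul le_rfl g1 hp2 hp1) g2 hp3 (mul_nonneg hp1 (Real.rpow_nonneg (le_trans hs0.le hA) _))
end

section
/- Let n ≥ 1 be an integer, t > 0 and 0 < r < √t/2. Let χ ∈ ℂⁿ \ {0} and θ ∈ (0,2π), and set ζ = i·((e^{−iθ} − 1)/θ)·χ ∈ ℂⁿ and τ = 2|χ|²·(θ − sin θ)/θ² ∈ ℝ. If |ζ| ≤ r and √|τ − t| ≤ r, then sin(θ/2) ≤ r·√(8π/(3t)). -/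
open Real

lemma norm_exp_neg_I_sub_one (θ : ℝ) (hθ0 : 0 < θ) (hθ2π : θ < 2 * Real.pi) :
    ‖Complex.exp (-Complex.I * (θ : ℂ)) - 1‖ = 2 * Real.sin (θ / 2) := by
  have hs : 0 < Real.sin (θ / 2) :=
    Real.sin_pos_of_pos_of_lt_pi (by linarith) (by linarith)
  have hexp : Complex.exp (-Complex.I * (θ : ℂ)) = Complex.cos θ - Complex.sin θ * Complex.I := by
    have h : (-Complex.I * (θ : ℂ)) = ((-θ : ℝ) : ℂ) * Complex.I := by
      push_cast; ring
    rw [h, Complex.exp_mul_I]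
    push_cast [Complex.cos_neg, Complex.sin_neg]
    ring
  have hre : (Complex.exp (-Complex.I * (θ : ℂ)) - 1).re = Real.cos θ - 1 := by
    rw [hexp]; simp [Complex.cos_ofReal_re]
  have him : (Complex.exp (-Complex.I * (θ : ℂ)) - 1).im = -Real.sin θ := by
    rw [hexp]; simp [Complex.sin_ofReal_re]
  have hsq : ‖Complex.exp (-Complex.I * (θ : ℂ)) - 1‖ ^ 2 = (2 * Real.sin (θ / 2)) ^ 2 := by
    rw [Complex.sq_norm, Complex.normSq_apply, hre, him]
    have hcos : Real.cos θ = 1 - 2 * Real.sin (θ / 2) ^ 2 := by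
      have h1 : Real.cos (2 * (θ/2)) = 2 * Real.cos (θ/2) ^ 2 - 1 := Real.cos_two_mul _
      rw [show 2 * (θ/2) = θ by ring] at h1
      have h2 : Real.sin (θ / 2) ^ 2 + Real.cos (θ / 2) ^ 2 = 1 := Real.sin_sq_add_cos_sq _
      nlinarith
    have hsin2 : Real.sin θ ^ 2 = 1 - Real.cos θ ^ 2 := Real.sin_sq θ
    nlinarith
  have h1 : 0 ≤ ‖Complex.exp (-Complex.I * (θ : ℂ)) - 1‖ := norm_nonneg _
  nlinarith

set_option maxHeartbeats 1600000 in
/-- Korányi-ball estimate: if the endpoint `Γ_1(χ,θ) = (ζ,τ)` of a Heisenberg geodesic with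
parameters `χ ≠ 0`, `θ ∈ (0,2π)` lies in the Korányi ball of radius `r < √t/2` centered at
`(0, t)` (i.e. `|ζ| ≤ r` and `√|τ − t| ≤ r`), then `sin(θ/2) ≤ r·√(8π/(3t))`. -/
theorem heisenberg_koranyi_angle_estimate (n : ℕ) (hn : 1 ≤ n) (t r : ℝ) (ht : 0 < t)
    (hr₀ : 0 < r) (hr : r < Real.sqrt t / 2)
    (χ : EuclideanSpace ℂ (Fin n)) (hχ : χ ≠ 0) (θ : ℝ) (hθ : θ ∈ Set.Ioo 0 (2 * Real.pi))
    (ζ : EuclideanSpace ℂ (Fin n))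
    (hζ : ζ = (Complex.I * ((Complex.exp (-Complex.I * (θ : ℂ)) - 1) / (θ : ℂ))) • χ)
    (τ : ℝ) (hτ : τ = 2 * ‖χ‖ ^ 2 * (θ - Real.sin θ) / θ ^ 2)
    (h₁ : ‖ζ‖ ≤ r) (h₂ : Real.sqrt |τ - t| ≤ r) :
    Real.sin (θ / 2) ≤ r * Real.sqrt (8 * Real.pi / (3 * t)) := by
  obtain ⟨hθ0, hθ2π⟩ := hθ
  have hπ := Real.pi_gt_three
  have hs : 0 < Real.sin (θ / 2) :=
    Real.sin_pos_of_pos_of_lt_pi (by linarith) (by linarith)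
  have hχn : 0 < ‖χ‖ := norm_pos_iff.mpr hχ
  -- norm of ζ
  have hnζ : ‖ζ‖ = 2 * Real.sin (θ / 2) / θ * ‖χ‖ := by
    rw [hζ, norm_smul, norm_mul, Complex.norm_I, one_mul, norm_div,
      norm_exp_neg_I_sub_one θ hθ0 hθ2π, Complex.norm_real, Real.norm_of_nonneg hθ0.le]
  -- r^2 < t/4
  have hst : Real.sqrt t ^ 2 = t := Real.sq_sqrt ht.le
  have hr2 : r ^ 2 < t / 4 := by nlinarith [Real.sqrt_nonneg t]
  -- |τ - t| ≤ r^2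
  have habs : |τ - t| ≤ r ^ 2 := by
    have h := Real.sq_sqrt (abs_nonneg (τ - t))
    nlinarith [Real.sqrt_nonneg (|τ - t|)]
  have hτge : 3 * t / 4 < τ := by
    have h := abs_le.mp habs
    linarith [h.1]
  -- θ - sin θ > 0
  have hθsin : 0 < θ - Real.sin θ := by
    have := Real.sin_lt hθ0
    linarith
  have hθsinlt : θ - Real.sin θ ≤ 2 * Real.pi + 1 := by
    have := Real.neg_one_le_sin θ
    linarith
  -- χ norm squared
  have hχsq : ‖χ‖ ^ 2 = τ * θ ^ 2 / (2 * (θ - Real.sin θ)) := by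
    field_simp at hτ ⊢
    linarith
  have key : Real.sin (θ / 2) ^ 2 ≤ r ^ 2 * (8 * Real.pi / (3 * t)) := by
    have h₁' : 2 * Real.sin (θ / 2) * ‖χ‖ ≤ r * θ := by
      rw [hnζ] at h₁
      rw [div_mul_eq_mul_div, div_le_iff₀ hθ0] at h₁
      linarith
    have hsq : 4 * Real.sin (θ / 2) ^ 2 * ‖χ‖ ^ 2 ≤ r ^ 2 * θ ^ 2 := by
      have h0 : 0 ≤ 2 * Real.sin (θ / 2) * ‖χ‖ := by positivity
      nlinarith [mul_le_mul h₁' h₁' h0 (by positivity : (0:ℝ) ≤ r * θ)]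
    rw [hχsq, ← mul_div_assoc] at hsq
    have h5 : 4 * Real.sin (θ/2)^2 * (τ * θ^2) ≤ r^2 * θ^2 * (2 * (θ - Real.sin θ)) :=
      (div_le_iff₀ (by positivity)).mp hsq
    have hθ2 : 0 < θ ^ 2 := by positivity
    have h6 : 4 * Real.sin (θ/2)^2 * τ ≤ r^2 * (2 * (θ - Real.sin θ)) := by
      have h5' : (4 * Real.sin (θ/2)^2 * τ) * θ^2 ≤ (r^2 * (2 * (θ - Real.sin θ))) * θ^2 := by
        linarith [h5]
      exact le_of_mul_le_mul_right h5' hθ2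
    have h7 : Real.sin (θ/2)^2 * (3 * t) ≤ r^2 * (8 * Real.pi) := by
      nlinarith [mul_nonneg (sq_nonneg (Real.sin (θ/2))) (by linarith : (0:ℝ) ≤ τ - 3*t/4),
        mul_nonneg (sq_nonneg r) (by linarith : (0:ℝ) ≤ 2*Real.pi + 1 - (θ - Real.sin θ)),
        mul_nonneg (sq_nonneg r) (by linarith : (0:ℝ) ≤ 4*Real.pi - 2)]
    have heq : r ^ 2 * (8 * Real.pi / (3 * t)) = r ^ 2 * (8 * Real.pi) / (3 * t) := by ring
    rw [heq, le_div_iff₀ (by positivity)]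
    exact h7
  calc Real.sin (θ / 2) = Real.sqrt (Real.sin (θ/2) ^ 2) := by
        rw [Real.sqrt_sq hs.le]
    _ ≤ Real.sqrt (r ^ 2 * (8 * Real.pi / (3 * t))) := Real.sqrt_le_sqrt key
    _ = r * Real.sqrt (8 * Real.pi / (3 * t)) := by
        rw [Real.sqrt_mul (sq_nonneg r), Real.sqrt_sq hr₀.le]
end

section
/- For every θ ∈ (0, 2π], one has 0 < θ − sin θ ≤ θ²/π; equivalently, (θ − sin θ)/θ² ∈ (0, 1/π]. -/
open Real

lemma key_half (θ : ℝ) (h0 : 0 ≤ θ) (h1 : θ ≤ π / 2) :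
    θ * (π - θ) ≤ π * Real.sin θ := by
  have hπ := Real.pi_gt_d6
  have hπ' := Real.pi_lt_d2
  rcases le_or_gt θ 1 with hle | hgt
  · rcases eq_or_lt_of_le h0 with h | h
    · simp [← h]
    · have hc := Real.sin_gt_sub_cube h
      have h4 : 0 ≤ θ * θ * (4 - π * θ) := by
        apply mul_nonneg (mul_nonneg h0 h0); nlinarith
      nlinarith [mul_lt_mul_of_pos_left hc Real.pi_pos]
  · rcases le_or_gt (π - 2) θ with hge | hlt
    · have hj : 2 * θ ≤ π * Real.sin θ := by
        have h := Real.mul_le_sin h0 h1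
        have h' := mul_le_mul_of_nonneg_left h Real.pi_pos.le
        calc 2 * θ = π * (2 / π * θ) := by field_simp
          _ ≤ π * Real.sin θ := h'
      nlinarith [mul_nonneg h0 (by linarith : (0:ℝ) ≤ 2 - (π - θ))]
    · -- 1 < θ < π - 2
      have hs1 : Real.sin 1 ≤ Real.sin θ := by
        apply Real.strictMonoOn_sin.monotoneOn ⟨by linarith, by linarith⟩
          ⟨by linarith, h1⟩ hgt.le
      have hsin1 : 2 * π - 4 ≤ π * Real.sin 1 := by
        have hc : Real.cos 1 ≤ 2 / 3 := Real.cos_one_le.trans (by norm_num)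
        have hs : Real.sin 1 ^ 2 + Real.cos 1 ^ 2 = 1 := Real.sin_sq_add_cos_sq 1
        have hsp : 0 ≤ Real.sin 1 := Real.sin_nonneg_of_nonneg_of_le_pi (by norm_num) (by linarith)
        have hcp : 0 ≤ Real.cos 1 := Real.cos_one_pos.le
        have hss : 5 / 9 ≤ Real.sin 1 ^ 2 := by nlinarith
        have h5 : 5 / 9 * π ^ 2 ≤ (π * Real.sin 1) ^ 2 := by nlinarith [sq_nonneg π]
        have hbnd : (2 * π - 4) ^ 2 ≤ 5 / 9 * π ^ 2 := by nlinarith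
        have hps : 0 ≤ π * Real.sin 1 := mul_nonneg Real.pi_pos.le hsp
        nlinarith [sq_nonneg (π * Real.sin 1 - (2 * π - 4)), sq_nonneg (π * Real.sin 1 + (2 * π - 4))]
      have hq : θ * (π - θ) ≤ (π - 2) * 2 := by nlinarith
      nlinarith [mul_le_mul_of_nonneg_left hs1 Real.pi_pos.le]

lemma key_pi (θ : ℝ) (h0 : 0 ≤ θ) (h1 : θ ≤ π) :
    θ * (π - θ) ≤ π * Real.sin θ := by
  rcases le_or_gt θ (π / 2) with h | h
  · exact key_half θ h0 h
  · have := key_half (π - θ) (by linarith) (by linarith)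
    rw [Real.sin_pi_sub] at this
    nlinarith

/-- For every `θ ∈ (0, 2π]`, one has `0 < θ − sin θ ≤ θ²/π`. -/
theorem sub_sin_pos_and_le (θ : ℝ) (hθ : θ ∈ Set.Ioc 0 (2 * Real.pi)) :
    0 < θ - Real.sin θ ∧ θ - Real.sin θ ≤ θ ^ 2 / Real.pi := by
  obtain ⟨h0, h2⟩ := hθ
  have hπ : (0:ℝ) < π := Real.pi_pos
  constructor
  · linarith [Real.sin_lt h0]
  · rw [le_div_iff₀ hπ]
    have key : θ * (π - θ) ≤ π * Real.sin θ := by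
      rcases le_or_gt θ π with h | h
      · exact key_pi θ h0.le h
      · have hs : Real.sin (θ - π) ≤ θ - π := Real.sin_le (by linarith)
        rw [Real.sin_sub_pi] at hs
        nlinarith [sq_nonneg (θ - π)]
    nlinarith
end
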